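/- arXiv:1705.10145 — 12 statements merged into one kernel-verified Lean document; each statement's English description precedes it below -/
import Mathlib

section
/- For any linear relation (V,C), the restricted relation on C^♭ satisfies (C|_{C^♭})^♭ = C^♭, and the restricted relation on C^♯ satisfies (C|_{C^♯})^♯ = C^♯. -/
variable {K : Type*} [Field K]

section Defs
variable {V : Type*} [AddCommGroup V] [Module K V]

/-- A ℤ-indexed chain through the relation `C`. -/
def IsCChain (C : Submodule K (V × V)) (f : ℤ → V) : Prop :=
  ∀ n : ℤ, (f n, f (n + 1)) ∈ C

/-- `C^♯`: elements lying on a bi-infinite chain. -/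
def csharp (C : Submodule K (V × V)) : Set V :=
  {v | ∃ f : ℤ → V, IsCChain C f ∧ f 0 = v}

/-- `C₊`: elements lying on a bi-infinite chain which is eventually zero to the right. -/
def cplus (C : Submodule K (V × V)) : Set V :=
  {v | ∃ f : ℤ → V, IsCChain C f ∧ f 0 = v ∧ ∃ N : ℤ, ∀ n ≥ N, f n = 0}

/-- `C₋`: elements lying on a bi-infinite chain which is eventually zero to the left. -/
def cminus (C : Submodule K (V × V)) : Set V :=
  {v | ∃ f : ℤ → V, IsCChain C f ∧ f 0 = v ∧ ∃ N : ℤ, ∀ n ≤ N, f n = 0}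

/-- `C^♭ = C₊ + C₋`. -/
def cflat (C : Submodule K (V × V)) : Set V :=
  {v | ∃ a ∈ cplus C, ∃ b ∈ cminus C, v = a + b}

end Defs

section Relative
variable {V : Type*} [AddCommGroup V] [Module K V]

/-- `(C|_U)^♯`: chains through `C` staying inside `U`. -/
def csharpIn (C : Submodule K (V × V)) (U : Set V) : Set V :=
  {v | ∃ f : ℤ → V, IsCChain C f ∧ (∀ n, f n ∈ U) ∧ f 0 = v}

/-- `(C|_U)₊`. -/
def cplusIn (C : Submodule K (V × V)) (U : Set V) : Set V :=
  {v | ∃ f : ℤ → V, IsCChain C f ∧ (∀ n, f n ∈ U) ∧ f 0 = v ∧ ∃ N : ℤ, ∀ n ≥ N, f n = 0}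

/-- `(C|_U)₋`. -/
def cminusIn (C : Submodule K (V × V)) (U : Set V) : Set V :=
  {v | ∃ f : ℤ → V, IsCChain C f ∧ (∀ n, f n ∈ U) ∧ f 0 = v ∧ ∃ N : ℤ, ∀ n ≤ N, f n = 0}

/-- `(C|_U)^♭ = (C|_U)₊ + (C|_U)₋`. -/
def cflatIn (C : Submodule K (V × V)) (U : Set V) : Set V :=
  {v | ∃ a ∈ cplusIn C U, ∃ b ∈ cminusIn C U, v = a + b}

end Relative


section Aux
variable {V : Type*} [AddCommGroup V] [Module K V]

lemma chain_shift {C : Submodule K (V × V)} {f : ℤ → V} (hf : IsCChain C f) (k : ℤ) :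
    IsCChain C (fun n => f (n + k)) := by
  intro n
  have := hf (n + k)
  simpa [add_assoc, add_comm, add_left_comm] using this

lemma zero_chain (C : Submodule K (V × V)) : IsCChain C (fun _ : ℤ => (0 : V)) := by
  intro n; exact C.zero_mem

lemma zero_mem_cplus (C : Submodule K (V × V)) : (0 : V) ∈ cplus C :=
  ⟨fun _ => 0, zero_chain C, rfl, 0, fun _ _ => rfl⟩

lemma zero_mem_cminus (C : Submodule K (V × V)) : (0 : V) ∈ cminus C :=
  ⟨fun _ => 0, zero_chain C, rfl, 0, fun _ _ => rfl⟩

lemma cplus_subset_cflat (C : Submodule K (V × V)) : cplus C ⊆ cflat C := by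
  intro a ha
  exact ⟨a, ha, 0, zero_mem_cminus C, (add_zero a).symm⟩

lemma cminus_subset_cflat (C : Submodule K (V × V)) : cminus C ⊆ cflat C := by
  intro b hb
  exact ⟨0, zero_mem_cplus C, b, hb, (zero_add b).symm⟩

lemma chain_mem_cplus {C : Submodule K (V × V)} {f : ℤ → V} (hf : IsCChain C f)
    {N : ℤ} (hN : ∀ n ≥ N, f n = 0) (k : ℤ) : f k ∈ cplus C := by
  refine ⟨fun n => f (n + k), chain_shift hf k, by simp, N - k, ?_⟩
  intro n hn
  exact hN (n + k) (by omega)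

lemma chain_mem_cminus {C : Submodule K (V × V)} {f : ℤ → V} (hf : IsCChain C f)
    {N : ℤ} (hN : ∀ n ≤ N, f n = 0) (k : ℤ) : f k ∈ cminus C := by
  refine ⟨fun n => f (n + k), chain_shift hf k, by simp, N - k, ?_⟩
  intro n hn
  exact hN (n + k) (by omega)

end Aux

/-- `(C|_{C^♭})^♭ = C^♭` and `(C|_{C^♯})^♯ = C^♯`. -/
theorem restrict_flat_sharp {V : Type*} [AddCommGroup V] [Module K V]
    (C : Submodule K (V × V)) :
    cflatIn C (cflat C) = cflat C ∧ csharpIn C (csharp C) = csharp C := by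
  constructor
  · ext v
    constructor
    · rintro ⟨a, ⟨f, hf, _, hf0, hfN⟩, b, ⟨g, hg, _, hg0, hgN⟩, rfl⟩
      exact ⟨a, ⟨f, hf, hf0, hfN⟩, b, ⟨g, hg, hg0, hgN⟩, rfl⟩
    · rintro ⟨a, ⟨f, hf, hf0, N, hfN⟩, b, ⟨g, hg, hg0, M, hgM⟩, rfl⟩
      refine ⟨a, ⟨f, hf, fun n => cplus_subset_cflat C (chain_mem_cplus hf hfN n),
        hf0, N, hfN⟩, b, ⟨g, hg, fun n => cminus_subset_cflat C (chain_mem_cminus hg hgM n),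
        hg0, M, hgM⟩, rfl⟩
  · ext v
    constructor
    · rintro ⟨f, hf, _, hf0⟩
      exact ⟨f, hf, hf0⟩
    · rintro ⟨f, hf, hf0⟩
      exact ⟨f, hf, fun n => ⟨fun m => f (m + n), chain_shift hf n, by simp⟩, hf0⟩
end

section
/- For any linear relation (V,C), C^♯ = C'' ∩ (C^{-1})'', C_+ = C'' ∩ (C^{-1})', and C_- = (C^{-1})'' ∩ C', where C' = ⋃_{n≥0} C^n 0 and C'' = {v_0 : ∃ v_n for n > 0 with v_n ∈ C v_{n+1} for all n ≥ 0}. -/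
variable {K : Type*} [Field K]

section Prime
variable {V : Type*} [AddCommGroup V] [Module K V]

/-- One forward step of the relation applied to a set: `C S = {v : ∃ u ∈ S, (u,v) ∈ C}`. -/
def cstep (C : Submodule K (V × V)) (S : Set V) : Set V :=
  {v | ∃ u ∈ S, (u, v) ∈ C}

/-- One step of the inverse relation applied to a set. -/
def cstepInv (C : Submodule K (V × V)) (S : Set V) : Set V :=
  {v | ∃ u ∈ S, (v, u) ∈ C}

/-- `C' = ⋃ₙ Cⁿ 0`. -/
def cprime (C : Submodule K (V × V)) : Set V :=
  ⋃ n : ℕ, (cstep C)^[n] {0}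

/-- `(C⁻¹)' = ⋃ₙ (C⁻¹)ⁿ 0`. -/
def cprimeInv (C : Submodule K (V × V)) : Set V :=
  ⋃ n : ℕ, (cstepInv C)^[n] {0}

/-- `C'' = {v₀ : ∃ vₙ (n > 0) with vₙ ∈ C vₙ₊₁ for all n ≥ 0}`. -/
def cdoublePrime (C : Submodule K (V × V)) : Set V :=
  {v | ∃ f : ℕ → V, f 0 = v ∧ ∀ n : ℕ, (f (n + 1), f n) ∈ C}

/-- `(C⁻¹)''`. -/
def cdoublePrimeInv (C : Submodule K (V × V)) : Set V :=
  {v | ∃ f : ℕ → V, f 0 = v ∧ ∀ n : ℕ, (f n, f (n + 1)) ∈ C}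

end Prime

section Aux
variable {V : Type*} [AddCommGroup V] [Module K V]

lemma iter_stepInv (C : Submodule K (V × V)) :
    ∀ n (v : V), v ∈ (cstepInv C)^[n] ({0} : Set V) ↔
      ∃ w : ℕ → V, w 0 = v ∧ (∀ k, (w k, w (k + 1)) ∈ C) ∧ ∀ k, n ≤ k → w k = 0 := by
  intro n
  induction n with
  | zero =>
    intro v
    simp only [Function.iterate_zero, id_eq, Set.mem_singleton_iff]
    constructor
    · rintro rfl
      exact ⟨fun _ => 0, rfl, fun _ => C.zero_mem, fun _ _ => rfl⟩
    · rintro ⟨w, rfl, _, hz⟩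
      exact hz 0 le_rfl
  | succ n ih =>
    intro v
    rw [Function.iterate_succ_apply']
    constructor
    · rintro ⟨u, hu, hvu⟩
      obtain ⟨w, rfl, hw, hz⟩ := (ih u).1 hu
      refine ⟨fun k => Nat.casesOn k v w, rfl, ?_, ?_⟩
      · intro k
        cases k with
        | zero => exact hvu
        | succ k => exact hw k
      · intro k hk
        cases k with
        | zero => omega
        | succ k => exact hz k (by omega)
    · rintro ⟨w, rfl, hw, hz⟩
      exact ⟨w 1, (ih (w 1)).2 ⟨fun k => w (k + 1), rfl, fun k => hw (k + 1),
        fun k hk => hz (k + 1) (by omega)⟩, hw 0⟩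

lemma iter_step (C : Submodule K (V × V)) :
    ∀ n (v : V), v ∈ (cstep C)^[n] ({0} : Set V) ↔
      ∃ w : ℕ → V, w 0 = v ∧ (∀ k, (w (k + 1), w k) ∈ C) ∧ ∀ k, n ≤ k → w k = 0 := by
  intro n
  induction n with
  | zero =>
    intro v
    simp only [Function.iterate_zero, id_eq, Set.mem_singleton_iff]
    constructor
    · rintro rfl
      exact ⟨fun _ => 0, rfl, fun _ => C.zero_mem, fun _ _ => rfl⟩
    · rintro ⟨w, rfl, _, hz⟩
      exact hz 0 le_rfl
  | succ n ih =>
    intro v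
    rw [Function.iterate_succ_apply']
    constructor
    · rintro ⟨u, hu, hvu⟩
      obtain ⟨w, rfl, hw, hz⟩ := (ih u).1 hu
      refine ⟨fun k => Nat.casesOn k v w, rfl, ?_, ?_⟩
      · intro k
        cases k with
        | zero => exact hvu
        | succ k => exact hw k
      · intro k hk
        cases k with
        | zero => omega
        | succ k => exact hz k (by omega)
    · rintro ⟨w, rfl, hw, hz⟩
      exact ⟨w 1, (ih (w 1)).2 ⟨fun k => w (k + 1), rfl, fun k => hw (k + 1),
        fun k hk => hz (k + 1) (by omega)⟩, hw 0⟩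

lemma mem_cprimeInv (C : Submodule K (V × V)) (v : V) :
    v ∈ cprimeInv C ↔
      ∃ w : ℕ → V, w 0 = v ∧ (∀ k, (w k, w (k + 1)) ∈ C) ∧ ∃ n, ∀ k, n ≤ k → w k = 0 := by
  simp only [cprimeInv, Set.mem_iUnion, iter_stepInv]
  constructor
  · rintro ⟨n, w, h1, h2, h3⟩
    exact ⟨w, h1, h2, n, h3⟩
  · rintro ⟨w, h1, h2, n, h3⟩
    exact ⟨n, w, h1, h2, h3⟩

lemma mem_cprime (C : Submodule K (V × V)) (v : V) :
    v ∈ cprime C ↔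
      ∃ w : ℕ → V, w 0 = v ∧ (∀ k, (w (k + 1), w k) ∈ C) ∧ ∃ n, ∀ k, n ≤ k → w k = 0 := by
  simp only [cprime, Set.mem_iUnion, iter_step]
  constructor
  · rintro ⟨n, w, h1, h2, h3⟩
    exact ⟨w, h1, h2, n, h3⟩
  · rintro ⟨w, h1, h2, n, h3⟩
    exact ⟨n, w, h1, h2, h3⟩

/-- Splice a backward chain `f` (negative side) and a forward chain `g` (nonnegative side). -/
def splice (f g : ℕ → V) : ℤ → V := fun n => if 0 ≤ n then g n.toNat else f (-n).toNat

lemma splice_chain (C : Submodule K (V × V)) (f g : ℕ → V) (hfg : f 0 = g 0)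
    (hf : ∀ k, (f (k + 1), f k) ∈ C) (hg : ∀ k, (g k, g (k + 1)) ∈ C) :
    IsCChain C (splice f g) := by
  intro n
  by_cases h1 : 0 ≤ n
  · rw [show splice f g n = g n.toNat from if_pos h1,
      show splice f g (n + 1) = g (n.toNat + 1) by
        rw [show splice f g (n + 1) = g (n + 1).toNat from if_pos (by omega),
          show (n + 1).toNat = n.toNat + 1 by omega]]
    exact hg n.toNat
  · by_cases h2 : n = -1
    · subst h2
      rw [show splice f g (-1) = f 1 from if_neg (by omega),
        show (-1 : ℤ) + 1 = 0 by omega,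
        show splice f g 0 = g 0 from if_pos le_rfl, ← hfg]
      exact hf 0
    · rw [show splice f g n = f ((-(n + 1)).toNat + 1) by
          rw [show splice f g n = f (-n).toNat from if_neg h1,
            show (-n).toNat = (-(n + 1)).toNat + 1 by omega],
        show splice f g (n + 1) = f (-(n + 1)).toNat from if_neg (by omega)]
      exact hf (-(n + 1)).toNat

lemma splice_zero (f g : ℕ → V) : splice f g 0 = g 0 := if_pos le_rfl

lemma chain_fwd {C : Submodule K (V × V)} {h : ℤ → V} (hch : IsCChain C h) (n : ℕ) :
    (h (n : ℤ), h ((n + 1 : ℕ) : ℤ)) ∈ C := by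
  have := hch (n : ℤ)
  rwa [show ((n : ℤ) + 1) = ((n + 1 : ℕ) : ℤ) by push_cast; ring] at this

lemma chain_bwd {C : Submodule K (V × V)} {h : ℤ → V} (hch : IsCChain C h) (n : ℕ) :
    (h (-((n + 1 : ℕ) : ℤ)), h (-(n : ℤ))) ∈ C := by
  have := hch (-(n : ℤ) - 1)
  rw [show (-(n : ℤ) - 1) + 1 = -(n : ℤ) by ring] at this
  rwa [show (-((n + 1 : ℕ) : ℤ)) = -(n : ℤ) - 1 by push_cast; ring]

end Aux

/-- `C^♯ = C'' ∩ (C⁻¹)''`, `C₊ = C'' ∩ (C⁻¹)'`, and `C₋ = (C⁻¹)'' ∩ C'`. -/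
theorem sharp_plus_minus_via_primes
    {V : Type*} [AddCommGroup V] [Module K V] (C : Submodule K (V × V)) :
    csharp C = cdoublePrime C ∩ cdoublePrimeInv C ∧
    cplus C = cdoublePrime C ∩ cprimeInv C ∧
    cminus C = cdoublePrimeInv C ∩ cprime C := by
  refine ⟨?_, ?_, ?_⟩
  · ext v
    constructor
    · rintro ⟨h, hch, rfl⟩
      exact ⟨⟨fun n => h (-(n : ℤ)), by simp, fun n => chain_bwd hch n⟩,
        ⟨fun n => h (n : ℤ), by simp, fun n => chain_fwd hch n⟩⟩
    · rintro ⟨⟨f, hf0, hf⟩, ⟨g, hg0, hg⟩⟩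
      exact ⟨splice f g, splice_chain C f g (hf0.trans hg0.symm) hf hg,
        (splice_zero f g).trans hg0⟩
  · ext v
    constructor
    · rintro ⟨h, hch, rfl, N, hN⟩
      refine ⟨⟨fun n => h (-(n : ℤ)), by simp, fun n => chain_bwd hch n⟩,
        (mem_cprimeInv C _).2 ⟨fun n => h (n : ℤ), by simp, fun n => chain_fwd hch n,
          N.toNat, fun k hk => hN (k : ℤ) (by omega)⟩⟩
    · rintro ⟨⟨f, hf0, hf⟩, hv2⟩
      obtain ⟨w, hw0, hw, n, hz⟩ := (mem_cprimeInv C v).1 hv2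
      refine ⟨splice f w, splice_chain C f w (hf0.trans hw0.symm) hf hw,
        (splice_zero f w).trans hw0, (n : ℤ), fun m hm => ?_⟩
      rw [show splice f w m = w m.toNat from if_pos (by omega)]
      exact hz _ (by omega)
  · ext v
    constructor
    · rintro ⟨h, hch, rfl, N, hN⟩
      refine ⟨⟨fun n => h (n : ℤ), by simp, fun n => chain_fwd hch n⟩,
        (mem_cprime C _).2 ⟨fun n => h (-(n : ℤ)), by simp, fun n => chain_bwd hch n,
          (-N).toNat, fun k hk => hN (-(k : ℤ)) (by omega)⟩⟩
    · rintro ⟨⟨g, hg0, hg⟩, hv2⟩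
      obtain ⟨w, hw0, hw, n, hz⟩ := (mem_cprime C v).1 hv2
      refine ⟨splice w g, splice_chain C w g (hw0.trans hg0.symm) hw hg,
        (splice_zero w g).trans hg0, -(n : ℤ) - 1, fun m hm => ?_⟩
      rw [show splice w g m = w (-m).toNat from if_neg (by omega)]
      exact hz _ (by omega)
end

section
/- For any linear relation (V,C), one has C^♯ ∩ C C^♭ = C^♭, where C C^♭ = ⋃_{u ∈ C^♭} Cu. -/
variable {K : Type*} [Field K]

/-- `C^♯ ∩ C C^♭ = C^♭`, where `C C^♭ = ⋃_{u ∈ C^♭} Cu`. -/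
theorem sharp_inter_step_flat_eq_flat
    {V : Type*} [AddCommGroup V] [Module K V] (C : Submodule K (V × V)) :
    csharp C ∩ {v | ∃ u ∈ cflat C, (u, v) ∈ C} = cflat C := by
  ext v
  simp only [Set.mem_inter_iff, Set.mem_setOf_eq]
  constructor
  · rintro ⟨⟨h, hh, hh0⟩, u, ⟨a, ⟨f, hf, hf0, Nf, hNf⟩, b, ⟨g, hg, hg0, Ng, hNg⟩, rfl⟩, huv⟩
    -- v = f 1 + (v - f 1), with f 1 ∈ C₊ and v - f 1 ∈ C₋.
    refine ⟨f 1, ⟨fun n => f (n + 1), fun n => hf (n + 1), rfl, Nf,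
        fun n hn => hNf _ (by omega)⟩,
      v - f 1, ⟨fun n => if 0 ≤ n then h n - f (n + 1) else g (n + 1), ?_, ?_, ?_⟩,
      by abel⟩
    · intro n
      rcases lt_trichotomy n (-1) with hn | hn | hn
      · simp only [if_neg (by omega : ¬ (0:ℤ) ≤ n), if_neg (by omega : ¬ (0:ℤ) ≤ n + 1)]
        exact hg (n + 1)
      · subst hn
        simp only [if_neg (by norm_num : ¬ (0:ℤ) ≤ -1), if_pos (by norm_num : (0:ℤ) ≤ -1 + 1)]
        have h1 := C.sub_mem huv (hf 0)
        have e : ((a + b, v) : V × V) - (f 0, f (0 + 1)) = (g (-1 + 1), h (-1 + 1) - f (-1 + 1 + 1)) := by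
          rw [Prod.mk_sub_mk]
          norm_num [hf0, hg0, hh0]
        rwa [e] at h1
      · simp only [if_pos (by omega : (0:ℤ) ≤ n), if_pos (by omega : (0:ℤ) ≤ n + 1)]
        have h1 := C.sub_mem (hh n) (hf (n + 1))
        rwa [Prod.mk_sub_mk] at h1
    · simp [hh0]
    · refine ⟨min Ng (-1) - 1, fun n hn => ?_⟩
      simp only [if_neg (by omega : ¬ (0:ℤ) ≤ n)]
      exact hNg _ (by omega)
  · rintro ⟨a, ⟨f, hf, hf0, Nf, hNf⟩, b, ⟨g, hg, hg0, Ng, hNg⟩, rfl⟩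
    refine ⟨⟨fun n => f n + g n, fun n => C.add_mem (hf n) (hg n), by simp [hf0, hg0]⟩,
      f (-1) + g (-1),
      ⟨f (-1), ⟨fun n => f (n - 1), fun n => by simpa using hf (n - 1), by norm_num, Nf + 1,
        fun n hn => hNf _ (by omega)⟩,
       g (-1), ⟨fun n => g (n - 1), fun n => by simpa using hg (n - 1), by norm_num, Ng + 1,
        fun n hn => hNg _ (by omega)⟩, rfl⟩, ?_⟩
    have h1 := C.add_mem (hf (-1)) (hg (-1))
    rw [Prod.mk_add_mk] at h1
    norm_num [hf0, hg0] at h1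
    exact h1
end

section
/- Let 0 → (V₁,C₁) → (V₂,C₂) → (V₃,C₃) → 0 be an exact sequence of linear relations (meaning both 0 → V₁ → V₂ → V₃ → 0 and 0 → C₁ → C₂ → C₃ → 0 are exact sequences of vector spaces). If C₁^♯ = V₁ and C₃^♯ = V₃, then C₂^♯ = V₂. -/
variable {K : Type*} [Field K]

section Exact
variable {V₁ V₂ V₃ : Type*} [AddCommGroup V₁] [Module K V₁]
  [AddCommGroup V₂] [Module K V₂] [AddCommGroup V₃] [Module K V₃]
  (C₁ : Submodule K (V₁ × V₁)) (C₂ : Submodule K (V₂ × V₂)) (C₃ : Submodule K (V₃ × V₃))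
  (f : V₁ →ₗ[K] V₂) (g : V₂ →ₗ[K] V₃)

/-- `0 → (V₁,C₁) → (V₂,C₂) → (V₃,C₃) → 0` is an exact sequence of linear relations:
both the sequence of underlying spaces and the sequence of relation subspaces are exact. -/
def IsExactSeqOfRelations : Prop :=
  Function.Injective f ∧ Function.Surjective g ∧ LinearMap.range f = LinearMap.ker g ∧
  (∀ p ∈ C₁, (f p.1, f p.2) ∈ C₂) ∧ (∀ p ∈ C₂, (g p.1, g p.2) ∈ C₃) ∧
  (∀ p ∈ C₃, ∃ q ∈ C₂, (g q.1, g q.2) = p) ∧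
  (∀ q ∈ C₂, (g q.1, g q.2) = (0 : V₃ × V₃) → ∃ p ∈ C₁, (f p.1, f p.2) = q)

end Exact


/-- Auxiliary: build a bi-infinite sequence satisfying a step relation, given
that every element has a successor and a predecessor. -/
lemma chain_exists_aux {α : Type*} (P : ℤ → α → α → Prop) (x₀ : α)
    (hs : ∀ n x, ∃ y, P n x y) (hp : ∀ n y, ∃ x, P n x y) :
    ∃ a : ℤ → α, a 0 = x₀ ∧ ∀ n, P n (a n) (a (n + 1)) := by
  choose s hsP using hs
  choose p hpP using hp
  let r : ℕ → α := fun k => Nat.rec x₀ (fun k xk => s (k : ℤ) xk) k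
  let l : ℕ → α := fun k => Nat.rec x₀ (fun k yk => p (-((k : ℤ) + 1)) yk) k
  have hr : ∀ k : ℕ, r (k + 1) = s (k : ℤ) (r k) := fun _ => rfl
  have hl : ∀ k : ℕ, l (k + 1) = p (-((k : ℤ) + 1)) (l k) := fun _ => rfl
  refine ⟨fun n => if 0 ≤ n then r n.toNat else l (-n).toNat, rfl, ?_⟩
  intro n
  rcases le_or_gt 0 n with h | h
  · have h1 : (0 : ℤ) ≤ n + 1 := by omega
    simp only [if_pos h, if_pos h1]
    have hnt : (n + 1).toNat = n.toNat + 1 := by omega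
    have hc : (n.toNat : ℤ) = n := by omega
    rw [hnt, hr, hc]
    exact hsP n (r n.toNat)
  · have hn : ¬(0 : ℤ) ≤ n := by omega
    simp only [if_neg hn]
    set k := (-n).toNat - 1 with hkdef
    have hkn : (-n).toNat = k + 1 := by omega
    have hn' : n = -((k : ℤ) + 1) := by omega
    have ha1 : (if 0 ≤ n + 1 then r (n + 1).toNat else l (-(n + 1)).toNat) = l k := by
      rcases le_or_gt 0 (n + 1) with h2 | h2
      · have hz : n + 1 = 0 := by omega
        have hk0 : k = 0 := by omega
        rw [if_pos h2, hz, hk0]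
        rfl
      · rw [if_neg (by omega)]
        congr 1
        omega
    rw [ha1, hkn, hl, ← hn']
    exact hpP n (l k)

/-- In an exact sequence of linear relations, if `C₁^♯ = V₁` and `C₃^♯ = V₃`
then `C₂^♯ = V₂`. -/
theorem sharp_of_exact
    {V₁ V₂ V₃ : Type*} [AddCommGroup V₁] [Module K V₁]
    [AddCommGroup V₂] [Module K V₂] [AddCommGroup V₃] [Module K V₃]
    (C₁ : Submodule K (V₁ × V₁)) (C₂ : Submodule K (V₂ × V₂)) (C₃ : Submodule K (V₃ × V₃))
    (f : V₁ →ₗ[K] V₂) (g : V₂ →ₗ[K] V₃)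
    (hex : IsExactSeqOfRelations C₁ C₂ C₃ f g)
    (h1 : csharp C₁ = Set.univ) (h3 : csharp C₃ = Set.univ) :
    csharp C₂ = Set.univ := by
  obtain ⟨hf, hg, hrange, hC12, hC23, hsurj, hker⟩ := hex
  ext v
  simp only [Set.mem_univ, iff_true]
  obtain ⟨w, hw, hw0⟩ : (g v) ∈ csharp C₃ := by rw [h3]; trivial
  have hq : ∀ n : ℤ, ∃ q ∈ C₂, (g q.1, g q.2) = (w n, w (n + 1)) := fun n => hsurj _ (hw n)
  choose q hqC hqg using hq
  have hg1 : ∀ n, g (q n).1 = w n := fun n => (Prod.ext_iff.mp (hqg n)).1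
  have hg2 : ∀ n, g (q n).2 = w (n + 1) := fun n => (Prod.ext_iff.mp (hqg n)).2
  have he : ∀ n : ℤ, ∃ e, f e = (q n).2 - (q (n + 1)).1 := by
    intro n
    have hker' : (q n).2 - (q (n + 1)).1 ∈ LinearMap.ker g := by
      rw [LinearMap.mem_ker, map_sub, hg2 n, hg1 (n + 1), sub_self]
    rw [← hrange] at hker'
    exact hker'
  choose e hef using he
  obtain ⟨a0, ha0⟩ : ∃ a0, f a0 = v - (q 0).1 := by
    have hker' : v - (q 0).1 ∈ LinearMap.ker g := by
      rw [LinearMap.mem_ker, map_sub, hg1 0, hw0, sub_self]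
    rw [← hrange] at hker'
    exact hker'
  have hsucc : ∀ (n : ℤ) (x : V₁), ∃ y, (x, y - e n) ∈ C₁ := by
    intro n x
    obtain ⟨φ, hφ, hφ0⟩ : x ∈ csharp C₁ := by rw [h1]; trivial
    refine ⟨φ 1 + e n, ?_⟩
    have := hφ 0
    rw [hφ0] at this
    simpa using this
  have hpred : ∀ (n : ℤ) (y : V₁), ∃ x, (x, y - e n) ∈ C₁ := by
    intro n y
    obtain ⟨φ, hφ, hφ0⟩ : (y - e n) ∈ csharp C₁ := by rw [h1]; trivial
    refine ⟨φ (-1), ?_⟩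
    have := hφ (-1)
    norm_num at this
    rw [hφ0] at this
    exact this
  obtain ⟨a, ha0', haC⟩ := chain_exists_aux (fun n x y => (x, y - e n) ∈ C₁) a0 hsucc hpred
  refine ⟨fun n => (q n).1 + f (a n), ?_, ?_⟩
  · intro n
    have h1' : (f (a n), f (a (n + 1) - e n)) ∈ C₂ := hC12 _ (haC n)
    have hsum := C₂.add_mem (hqC n) h1'
    have key : ((q n).1 + f (a n), (q (n + 1)).1 + f (a (n + 1))) =
        ((q n).1, (q n).2) + (f (a n), f (a (n + 1) - e n)) := by
      refine Prod.ext rfl ?_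
      simp only [Prod.snd_add, map_sub, hef n]
      abel
    rw [key]
    exact hsum
  · simp only [ha0', ha0]
    abel
end

section
/- Let 0 → (V₁,C₁) → (V₂,C₂) → (V₃,C₃) → 0 be an exact sequence of linear relations. If C₁^♭ = V₁ and C₃^♭ = V₃, then C₂^♭ = V₂. -/
variable {K : Type*} [Field K]

section AuxLemmas
variable {V : Type*} [AddCommGroup V] [Module K V] {C : Submodule K (V × V)}

lemma cplus_zero : (0 : V) ∈ cplus C :=
  ⟨fun _ => 0, fun _ => C.zero_mem, rfl, 0, fun _ _ => rfl⟩

lemma cminus_zero : (0 : V) ∈ cminus C :=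
  ⟨fun _ => 0, fun _ => C.zero_mem, rfl, 0, fun _ _ => rfl⟩

lemma cplus_add {a b : V} (ha : a ∈ cplus C) (hb : b ∈ cplus C) : a + b ∈ cplus C := by
  obtain ⟨fa, hfa, ha0, Na, hNa⟩ := ha
  obtain ⟨fb, hfb, hb0, Nb, hNb⟩ := hb
  refine ⟨fun n => fa n + fb n, fun n => C.add_mem (hfa n) (hfb n),
    by show fa 0 + fb 0 = a + b; rw [ha0, hb0],
    max Na Nb, fun n hn => ?_⟩
  show fa n + fb n = 0
  rw [hNa n (le_trans (le_max_left _ _) hn), hNb n (le_trans (le_max_right _ _) hn), add_zero]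

lemma cminus_add {a b : V} (ha : a ∈ cminus C) (hb : b ∈ cminus C) : a + b ∈ cminus C := by
  obtain ⟨fa, hfa, ha0, Na, hNa⟩ := ha
  obtain ⟨fb, hfb, hb0, Nb, hNb⟩ := hb
  refine ⟨fun n => fa n + fb n, fun n => C.add_mem (hfa n) (hfb n),
    by show fa 0 + fb 0 = a + b; rw [ha0, hb0],
    min Na Nb, fun n hn => ?_⟩
  show fa n + fb n = 0
  rw [hNa n (le_trans hn (min_le_left _ _)), hNb n (le_trans hn (min_le_right _ _)), add_zero]

/-- Every element lying on a bi-infinite chain is in the range of the relation. -/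
lemma mem_range_of_cplus {a : V} (ha : a ∈ cplus C) : ∃ s, (s, a) ∈ C := by
  obtain ⟨fa, hfa, ha0, _⟩ := ha
  refine ⟨fa (-1), ?_⟩
  have := hfa (-1)
  norm_num at this
  rwa [ha0] at this

lemma mem_range_of_cminus {a : V} (ha : a ∈ cminus C) : ∃ s, (s, a) ∈ C := by
  obtain ⟨fa, hfa, ha0, _⟩ := ha
  refine ⟨fa (-1), ?_⟩
  have := hfa (-1)
  norm_num at this
  rwa [ha0] at this

lemma mem_dom_of_cplus {a : V} (ha : a ∈ cplus C) : ∃ s, (a, s) ∈ C := by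
  obtain ⟨fa, hfa, ha0, _⟩ := ha
  exact ⟨fa 1, by have := hfa 0; norm_num at this; rwa [ha0] at this⟩

lemma mem_dom_of_cminus {a : V} (ha : a ∈ cminus C) : ∃ s, (a, s) ∈ C := by
  obtain ⟨fa, hfa, ha0, _⟩ := ha
  exact ⟨fa 1, by have := hfa 0; norm_num at this; rwa [ha0] at this⟩

/-- If `C^♭ = V` then the relation `C` has full range. -/
lemma range_total (hC : cflat C = Set.univ) : ∀ t : V, ∃ s, (s, t) ∈ C := by
  intro t
  have ht : t ∈ cflat C := hC ▸ Set.mem_univ t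
  obtain ⟨a, ha, b, hb, rfl⟩ := ht
  obtain ⟨sa, hsa⟩ := mem_range_of_cplus ha
  obtain ⟨sb, hsb⟩ := mem_range_of_cminus hb
  exact ⟨sa + sb, C.add_mem hsa hsb⟩

/-- If `C^♭ = V` then the relation `C` has full domain. -/
lemma dom_total (hC : cflat C = Set.univ) : ∀ t : V, ∃ s, (t, s) ∈ C := by
  intro t
  have ht : t ∈ cflat C := hC ▸ Set.mem_univ t
  obtain ⟨a, ha, b, hb, rfl⟩ := ht
  obtain ⟨sa, hsa⟩ := mem_dom_of_cplus ha
  obtain ⟨sb, hsb⟩ := mem_dom_of_cminus hb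
  exact ⟨sa + sb, C.add_mem hsa hsb⟩

end AuxLemmas

section MapLemmas
variable {W₁ W₂ : Type*} [AddCommGroup W₁] [Module K W₁] [AddCommGroup W₂] [Module K W₂]
  {D₁ : Submodule K (W₁ × W₁)} {D₂ : Submodule K (W₂ × W₂)} {φ : W₁ →ₗ[K] W₂}

lemma map_cplus (hmap : ∀ p ∈ D₁, (φ p.1, φ p.2) ∈ D₂) {a : W₁} (ha : a ∈ cplus D₁) :
    φ a ∈ cplus D₂ := by
  obtain ⟨fa, hfa, ha0, Na, hNa⟩ := ha
  exact ⟨fun n => φ (fa n), fun n => hmap (fa n, fa (n + 1)) (hfa n),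
    by show φ (fa 0) = φ a; rw [ha0],
    Na, fun n hn => by show φ (fa n) = 0; rw [hNa n hn, map_zero]⟩

lemma map_cminus (hmap : ∀ p ∈ D₁, (φ p.1, φ p.2) ∈ D₂) {a : W₁} (ha : a ∈ cminus D₁) :
    φ a ∈ cminus D₂ := by
  obtain ⟨fa, hfa, ha0, Na, hNa⟩ := ha
  exact ⟨fun n => φ (fa n), fun n => hmap (fa n, fa (n + 1)) (hfa n),
    by show φ (fa 0) = φ a; rw [ha0],
    Na, fun n hn => by show φ (fa n) = 0; rw [hNa n hn, map_zero]⟩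

end MapLemmas

section LiftLemmas
variable {V₁ V₂ V₃ : Type*} [AddCommGroup V₁] [Module K V₁]
  [AddCommGroup V₂] [Module K V₂] [AddCommGroup V₃] [Module K V₃]
  {C₁ : Submodule K (V₁ × V₁)} {C₂ : Submodule K (V₂ × V₂)} {C₃ : Submodule K (V₃ × V₃)}
  {f : V₁ →ₗ[K] V₂} {g : V₂ →ₗ[K] V₃}

/-- Backward lifting: elements of `cplus C₃` lift to `cplus C₂`. -/
lemma cplus_lift (hker : LinearMap.range f = LinearMap.ker g)
    (hmap : ∀ p ∈ C₁, (f p.1, f p.2) ∈ C₂)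
    (hsur : ∀ p ∈ C₃, ∃ q ∈ C₂, (g q.1, g q.2) = p)
    (hrt : ∀ t : V₁, ∃ s, (s, t) ∈ C₁)
    {x : V₃} (hx : x ∈ cplus C₃) : ∃ v ∈ cplus C₂, g v = x := by
  obtain ⟨c, hc, hc0, N₀, hN₀⟩ := hx
  set N : ℤ := max N₀ 1 with hNdef
  have hN : ∀ n ≥ N, c n = 0 := fun n hn => hN₀ n (le_trans (le_max_left _ _) hn)
  have hN1 : 1 ≤ N := le_max_right _ _
  -- one backward step
  have step : ∀ (n : ℤ) (y : V₂), ∃ x', g y = c (n + 1) → (x', y) ∈ C₂ ∧ g x' = c n := by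
    intro n y
    obtain ⟨q, hq, hgq⟩ := hsur (c n, c (n + 1)) (hc n)
    by_cases hy : g y = c (n + 1)
    · have h2 : y - q.2 ∈ LinearMap.ker g := by
        rw [LinearMap.mem_ker, map_sub, hy]
        have : g q.2 = c (n + 1) := congrArg Prod.snd hgq
        rw [this, sub_self]
      rw [← hker] at h2
      obtain ⟨z, hz⟩ := h2
      obtain ⟨z', hz'⟩ := hrt z
      refine ⟨q.1 + f z', fun _ => ⟨?_, ?_⟩⟩
      · have : (q.1 + f z', y) = (q.1, q.2) + (f z', f z) := by
          rw [Prod.mk_add_mk, hz]; simp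
        rw [this]
        exact C₂.add_mem hq (hmap (z', z) hz')
      · have hfz' : g (f z') = 0 := by
          have : f z' ∈ LinearMap.ker g := hker ▸ LinearMap.mem_range_self f z'
          exact this
        rw [map_add, hfz', add_zero]
        exact congrArg Prod.fst hgq
    · exact ⟨0, fun h => absurd h hy⟩
  choose st hst using step
  -- h k is the value of the chain at integer index N - k
  set h : ℕ → V₂ := fun k => Nat.rec (0 : V₂) (fun k ih => st (N - (k + 1 : ℕ)) ih) k with hdef
  have h0 : h 0 = 0 := rfl
  have hsucc : ∀ k : ℕ, h (k + 1) = st (N - (k + 1 : ℕ)) (h k) := fun k => rfl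
  have key : ∀ k : ℕ, g (h k) = c (N - k) := by
    intro k
    induction k with
    | zero =>
      rw [h0, map_zero]
      have he : N - ((0:ℕ):ℤ) = N := by push_cast; ring
      rw [he]
      exact (hN N le_rfl).symm
    | succ k ih =>
      have harg : g (h k) = c (N - (k + 1 : ℕ) + 1) := by
        rw [ih]; congr 1; push_cast; ring
      rw [hsucc k]
      exact (hst (N - (k + 1 : ℕ)) (h k) harg).2
  have chain : ∀ k : ℕ, (h (k + 1), h k) ∈ C₂ := by
    intro k
    have harg : g (h k) = c (N - (k + 1 : ℕ) + 1) := by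
      rw [key k]; congr 1; push_cast; ring
    rw [hsucc k]
    exact (hst (N - (k + 1 : ℕ)) (h k) harg).1
  set w : ℤ → V₂ := fun n => if N ≤ n then 0 else h (N - n).toNat with hwdef
  have hwchain : IsCChain C₂ w
  · intro n
    by_cases hn : N ≤ n
    · have hn1 : N ≤ n + 1 := by omega
      simp only [hwdef, if_pos hn, if_pos hn1]
      exact C₂.zero_mem
    · by_cases hn1 : N ≤ n + 1
      · -- n = N - 1
        have h1 : (N - n).toNat = 1 := by omega
        simp only [hwdef, if_neg hn, if_pos hn1, h1]
        have := chain 0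
        rwa [h0] at this
      · have h2 : (N - n).toNat = (N - (n + 1)).toNat + 1 := by omega
        simp only [hwdef, if_neg hn, if_neg hn1, h2]
        exact chain _
  have hw0 : w 0 = h N.toNat := by
    simp only [hwdef, if_neg (by omega : ¬ N ≤ 0)]
    congr 1
    omega
  refine ⟨w 0, ⟨w, hwchain, rfl, N, fun n hn => by simp only [hwdef, if_pos hn]⟩, ?_⟩
  rw [hw0, key N.toNat, hc0.symm]
  congr 1
  omega

/-- Forward lifting: elements of `cminus C₃` lift to `cminus C₂`. -/
lemma cminus_lift (hker : LinearMap.range f = LinearMap.ker g)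
    (hmap : ∀ p ∈ C₁, (f p.1, f p.2) ∈ C₂)
    (hsur : ∀ p ∈ C₃, ∃ q ∈ C₂, (g q.1, g q.2) = p)
    (hdt : ∀ t : V₁, ∃ s, (t, s) ∈ C₁)
    {x : V₃} (hx : x ∈ cminus C₃) : ∃ v ∈ cminus C₂, g v = x := by
  obtain ⟨c, hc, hc0, N₀, hN₀⟩ := hx
  set N : ℤ := min N₀ (-1) with hNdef
  have hN : ∀ n ≤ N, c n = 0 := fun n hn => hN₀ n (le_trans hn (min_le_left _ _))
  have hN1 : N ≤ -1 := min_le_right _ _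
  -- one forward step
  have step : ∀ (n : ℤ) (y : V₂), ∃ x', g y = c n → (y, x') ∈ C₂ ∧ g x' = c (n + 1) := by
    intro n y
    obtain ⟨q, hq, hgq⟩ := hsur (c n, c (n + 1)) (hc n)
    by_cases hy : g y = c n
    · have h2 : y - q.1 ∈ LinearMap.ker g := by
        rw [LinearMap.mem_ker, map_sub, hy]
        have : g q.1 = c n := congrArg Prod.fst hgq
        rw [this, sub_self]
      rw [← hker] at h2
      obtain ⟨z, hz⟩ := h2
      obtain ⟨z', hz'⟩ := hdt z
      refine ⟨q.2 + f z', fun _ => ⟨?_, ?_⟩⟩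
      · have : (y, q.2 + f z') = (q.1, q.2) + (f z, f z') := by
          rw [Prod.mk_add_mk, hz]; simp
        rw [this]
        exact C₂.add_mem hq (hmap (z, z') hz')
      · have hfz' : g (f z') = 0 := by
          have : f z' ∈ LinearMap.ker g := hker ▸ LinearMap.mem_range_self f z'
          exact this
        rw [map_add, hfz', add_zero]
        exact congrArg Prod.snd hgq
    · exact ⟨0, fun h => absurd h hy⟩
  choose st hst using step
  -- h k is the value of the chain at integer index N + k
  set h : ℕ → V₂ := fun k => Nat.rec (0 : V₂) (fun k ih => st (N + k) ih) k with hdef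
  have h0 : h 0 = 0 := rfl
  have hsucc : ∀ k : ℕ, h (k + 1) = st (N + k) (h k) := fun k => rfl
  have key : ∀ k : ℕ, g (h k) = c (N + k) := by
    intro k
    induction k with
    | zero =>
      rw [h0, map_zero]
      have he : N + ((0:ℕ):ℤ) = N := by push_cast; ring
      rw [he]
      exact (hN N le_rfl).symm
    | succ k ih =>
      rw [hsucc k]
      have := (hst (N + k) (h k) ih).2
      rw [this]; congr 1; push_cast; ring
  have chain : ∀ k : ℕ, (h k, h (k + 1)) ∈ C₂ := by
    intro k
    rw [hsucc k]
    exact (hst (N + k) (h k) (key k)).1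
  set w : ℤ → V₂ := fun n => if n ≤ N then 0 else h (n - N).toNat with hwdef
  have hwchain : IsCChain C₂ w
  · intro n
    by_cases hn1 : n + 1 ≤ N
    · have hn : n ≤ N := by omega
      simp only [hwdef, if_pos hn, if_pos hn1]
      exact C₂.zero_mem
    · by_cases hn : n ≤ N
      · -- n = N
        have h1 : (n + 1 - N).toNat = 1 := by omega
        simp only [hwdef, if_pos hn, if_neg hn1, h1]
        have := chain 0
        rwa [h0] at this
      · have h2 : (n + 1 - N).toNat = (n - N).toNat + 1 := by omega
        simp only [hwdef, if_neg hn, if_neg hn1, h2]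
        exact chain _
  have hw0 : w 0 = h (-N).toNat := by
    simp only [hwdef, if_neg (by omega : ¬ (0:ℤ) ≤ N)]
    congr 1
    omega
  refine ⟨w 0, ⟨w, hwchain, rfl, N, fun n hn => by simp only [hwdef, if_pos hn]⟩, ?_⟩
  rw [hw0, key (-N).toNat, hc0.symm]
  congr 1
  omega

end LiftLemmas

/-- In an exact sequence of linear relations, if `C₁^♭ = V₁` and `C₃^♭ = V₃`
then `C₂^♭ = V₂`. -/
theorem flat_of_exact
    {V₁ V₂ V₃ : Type*} [AddCommGroup V₁] [Module K V₁]
    [AddCommGroup V₂] [Module K V₂] [AddCommGroup V₃] [Module K V₃]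
    (C₁ : Submodule K (V₁ × V₁)) (C₂ : Submodule K (V₂ × V₂)) (C₃ : Submodule K (V₃ × V₃))
    (f : V₁ →ₗ[K] V₂) (g : V₂ →ₗ[K] V₃)
    (hex : IsExactSeqOfRelations C₁ C₂ C₃ f g)
    (h1 : cflat C₁ = Set.univ) (h3 : cflat C₃ = Set.univ) :
    cflat C₂ = Set.univ := by
  obtain ⟨hinj, hsurj, hker, hmap12, hmap23, hsur, hlift⟩ := hex
  apply Set.eq_univ_of_forall
  intro v
  have hgv : g v ∈ cflat C₃ := h3 ▸ Set.mem_univ _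
  obtain ⟨a, ha, b, hb, hab⟩ := hgv
  obtain ⟨vp, hvp, hgvp⟩ := cplus_lift hker hmap12 hsur (range_total h1) ha
  obtain ⟨vm, hvm, hgvm⟩ := cminus_lift hker hmap12 hsur (dom_total h1) hb
  have hdiff : v - vp - vm ∈ LinearMap.ker g := by
    rw [LinearMap.mem_ker, map_sub, map_sub, hgvp, hgvm, hab]
    abel
  rw [← hker] at hdiff
  obtain ⟨z, hz⟩ := hdiff
  have hzflat : z ∈ cflat C₁ := h1 ▸ Set.mem_univ _
  obtain ⟨za, hza, zb, hzb, hzab⟩ := hzflat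
  refine ⟨vp + f za, cplus_add hvp (map_cplus hmap12 hza),
    vm + f zb, cminus_add hvm (map_cminus hmap12 hzb), ?_⟩
  have : f za + f zb = v - vp - vm := by rw [← map_add, ← hzab, hz]
  have := this
  linear_combination (norm := abel) -this
end

section
/- Let 0 → (V₁,C₁) → (V₂,C₂) → (V₃,C₃) → 0 be an exact sequence of linear relations, identifying V₁ with a subspace of V₂. If C₁^♭ = V₁ and C₃^♭ = 0, then C₂^♭ = V₁. -/
variable {K : Type*} [Field K]

/-- In an exact sequence of linear relations, identifying `V₁` with its image in `V₂`,
if `C₁^♭ = V₁` and `C₃^♭ = 0` then `C₂^♭ = V₁`. -/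
theorem flat_of_exact_middle
    {V₁ V₂ V₃ : Type*} [AddCommGroup V₁] [Module K V₁]
    [AddCommGroup V₂] [Module K V₂] [AddCommGroup V₃] [Module K V₃]
    (C₁ : Submodule K (V₁ × V₁)) (C₂ : Submodule K (V₂ × V₂)) (C₃ : Submodule K (V₃ × V₃))
    (f : V₁ →ₗ[K] V₂) (g : V₂ →ₗ[K] V₃)
    (hex : IsExactSeqOfRelations C₁ C₂ C₃ f g)
    (h1 : cflat C₁ = Set.univ) (h3 : cflat C₃ = {0}) :
    cflat C₂ = Set.range f := by
  obtain ⟨hf, hg, hrk, h12, h23, hsur, hker⟩ := hex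
  ext v
  simp only [Set.mem_range]
  constructor
  · rintro ⟨a, ⟨fa, hfa, ha0, N, hN⟩, b, ⟨fb, hfb, hb0, M, hM⟩, rfl⟩
    have hga : g a = 0 := by
      have : g a ∈ cflat C₃ :=
        ⟨g a, ⟨fun n => g (fa n), fun n => h23 _ (hfa n), by simp [ha0],
          N, fun n hn => by simp [hN n hn]⟩,
         0, ⟨fun _ => 0, fun n => C₃.zero_mem, rfl, 0, fun _ _ => rfl⟩, by simp⟩
      rw [h3] at this; exact this
    have hgb : g b = 0 := by
      have : g b ∈ cflat C₃ :=
        ⟨0, ⟨fun _ => 0, fun n => C₃.zero_mem, rfl, 0, fun _ _ => rfl⟩,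
         g b, ⟨fun n => g (fb n), fun n => h23 _ (hfb n), by simp [hb0],
          M, fun n hn => by simp [hM n hn]⟩, by simp⟩
      rw [h3] at this; exact this
    have hk : a + b ∈ LinearMap.ker g := by simp [LinearMap.mem_ker, hga, hgb]
    rw [← hrk] at hk
    exact hk
  · rintro ⟨w, rfl⟩
    have hw : w ∈ cflat C₁ := by rw [h1]; trivial
    obtain ⟨a, ⟨fa, hfa, ha0, N, hN⟩, b, ⟨fb, hfb, hb0, M, hM⟩, rfl⟩ := hw
    exact ⟨f a, ⟨fun n => f (fa n), fun n => h12 _ (hfa n), by simp [ha0],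
        N, fun n hn => by simp [hN n hn]⟩,
      f b, ⟨fun n => f (fb n), fun n => h12 _ (hfb n), by simp [hb0],
        M, fun n hn => by simp [hM n hn]⟩, by simp⟩
end

section
/- Let (V,C) be a linear relation with V = C^♯. Then every extension of Kronecker modules 0 → (V,C) → (W,D) → R₁ → 0 splits, where R₁ is the Kronecker module with X = K·x, Y = K·y, p(x) = 0, q(x) = y. -/
variable {K : Type*} [Field K]

/-- If `V = C^♯`, every extension of Kronecker modules
`0 → (C,V,pr₁,pr₂) → (X,Y,p,q) → R₁ → 0` splits, where `R₁` has one-dimensional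
`X`- and `Y`-spaces with `p = 0` and `q` an isomorphism. The extension is given by
injections `iX, iY`, surjections `πX, πY`, exactness, and commutation with the
structure maps; a splitting is a retraction of Kronecker modules. -/
theorem ext_R1_splits
    {V : Type*} [AddCommGroup V] [Module K V] (C : Submodule K (V × V))
    (hV : csharp C = Set.univ)
    {X Y : Type*} [AddCommGroup X] [Module K X] [AddCommGroup Y] [Module K Y]
    (p q : X →ₗ[K] Y)
    (iX : ↥C →ₗ[K] X) (iY : V →ₗ[K] Y) (πX : X →ₗ[K] K) (πY : Y →ₗ[K] K)
    (hiX : Function.Injective iX) (hiY : Function.Injective iY)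
    (hπX : Function.Surjective πX) (hπY : Function.Surjective πY)
    (hexX : LinearMap.range iX = LinearMap.ker πX)
    (hexY : LinearMap.range iY = LinearMap.ker πY)
    (hc1 : ∀ c : ↥C, p (iX c) = iY (c : V × V).1)
    (hc2 : ∀ c : ↥C, q (iX c) = iY (c : V × V).2)
    (hc3 : ∀ x : X, πY (p x) = 0)
    (hc4 : ∀ x : X, πY (q x) = πX x) :
    ∃ (sX : X →ₗ[K] ↥C) (sY : Y →ₗ[K] V),
      (∀ c : ↥C, sX (iX c) = c) ∧ (∀ v : V, sY (iY v) = v) ∧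
      (∀ x : X, ((sX x : V × V)).1 = sY (p x)) ∧
      (∀ x : X, ((sX x : V × V)).2 = sY (q x)) := by
  obtain ⟨x₀, hx₀⟩ := hπX 1
  have hmem : p x₀ ∈ LinearMap.range iY := by rw [hexY]; exact hc3 x₀
  obtain ⟨v₀, hv₀⟩ := hmem
  obtain ⟨f, hf, hf0⟩ : v₀ ∈ csharp C := by rw [hV]; trivial
  set c₀ : ↥C := ⟨(f 0, f 1), hf 0⟩ with hc₀
  set x₁ : X := x₀ - iX c₀ with hx₁def
  have hkerX : ∀ c : ↥C, πX (iX c) = 0 := fun c =>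
    (hexX ▸ LinearMap.mem_range_self iX c : iX c ∈ LinearMap.ker πX)
  have hkerY : ∀ v : V, πY (iY v) = 0 := fun v =>
    (hexY ▸ LinearMap.mem_range_self iY v : iY v ∈ LinearMap.ker πY)
  have hπx₁ : πX x₁ = 1 := by simp [hx₁def, map_sub, hkerX c₀, hx₀]
  have hpx₁ : p x₁ = 0 := by
    have h1 : p (iX c₀) = iY (f 0) := hc1 c₀
    rw [hx₁def, map_sub, h1, hf0, ← hv₀, sub_self]
  set y₁ : Y := q x₁ with hy₁def
  have hπy₁ : πY y₁ = 1 := by rw [hy₁def, hc4, hπx₁]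
  -- the inverse equivalences
  set eX := LinearEquiv.ofInjective iX hiX with heX
  set eY := LinearEquiv.ofInjective iY hiY with heY
  have heXap : ∀ z : LinearMap.range iX, iX (eX.symm z) = (z : X) := by
    intro z
    conv_rhs => rw [← eX.apply_symm_apply z]
    rw [heX, LinearEquiv.ofInjective_apply]
  have heYap : ∀ z : LinearMap.range iY, iY (eY.symm z) = (z : Y) := by
    intro z
    conv_rhs => rw [← eY.apply_symm_apply z]
    rw [heY, LinearEquiv.ofInjective_apply]
  set rX : X →ₗ[K] X :=
    LinearMap.id - (LinearMap.toSpanSingleton K X x₁).comp πX with hrX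
  set rY : Y →ₗ[K] Y :=
    LinearMap.id - (LinearMap.toSpanSingleton K Y y₁).comp πY with hrY
  have hrXmem : ∀ x : X, rX x ∈ LinearMap.range iX := by
    intro x
    rw [hexX]
    simp [hrX, LinearMap.mem_ker, map_sub, LinearMap.toSpanSingleton_apply, hπx₁]
  have hrYmem : ∀ y : Y, rY y ∈ LinearMap.range iY := by
    intro y
    rw [hexY]
    simp [hrY, LinearMap.mem_ker, map_sub, LinearMap.toSpanSingleton_apply, hπy₁]
  set sX : X →ₗ[K] ↥C :=
    eX.symm.toLinearMap.comp (rX.codRestrict (LinearMap.range iX) hrXmem) with hsX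
  set sY : Y →ₗ[K] V :=
    eY.symm.toLinearMap.comp (rY.codRestrict (LinearMap.range iY) hrYmem) with hsY
  have hsXap : ∀ x : X, iX (sX x) = x - πX x • x₁ := by
    intro x
    rw [hsX]
    show iX (eX.symm ⟨rX x, hrXmem x⟩) = _
    simpa [hrX, LinearMap.toSpanSingleton_apply] using
      heXap ⟨rX x, hrXmem x⟩
  have hsYap : ∀ y : Y, iY (sY y) = y - πY y • y₁ := by
    intro y
    rw [hsY]
    show iY (eY.symm ⟨rY y, hrYmem y⟩) = _
    simpa [hrY, LinearMap.toSpanSingleton_apply] using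
      heYap ⟨rY y, hrYmem y⟩
  refine ⟨sX, sY, ?_, ?_, ?_, ?_⟩
  · intro c
    apply hiX
    rw [hsXap, hkerX c, zero_smul, sub_zero]
  · intro v
    apply hiY
    rw [hsYap, hkerY v, zero_smul, sub_zero]
  · intro x
    apply hiY
    have h1 : iY ((sX x : V × V)).1 = p (iX (sX x)) := (hc1 (sX x)).symm
    rw [h1, hsXap, map_sub, map_smul, hpx₁, smul_zero, sub_zero,
      hsYap, hc3, zero_smul, sub_zero]
  · intro x
    apply hiY
    have h2 : iY ((sX x : V × V)).2 = q (iX (sX x)) := (hc2 (sX x)).symm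
    rw [h2, hsXap, map_sub, map_smul, hsYap, hc4, hy₁def]
end

section
/- Let (V,C) be a linear relation with V = C^♯. Then every extension of Kronecker modules 0 → (V,C) → (W,D) → Z₁ → 0 splits, where Z₁ is the Kronecker module with X = K·x, Y = K·y, p(x) = y, q(x) = 0. -/
variable {K : Type*} [Field K]

/-- If `V = C^♯`, every extension of Kronecker modules
`0 → (C,V,pr₁,pr₂) → (X,Y,p,q) → Z₁ → 0` splits, where `Z₁` has one-dimensional
`X`- and `Y`-spaces with `p` an isomorphism and `q = 0`. The extension is given by
injections `iX, iY`, surjections `πX, πY`, exactness, and commutation with the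
structure maps; a splitting is a retraction of Kronecker modules. -/
theorem ext_Z1_splits
    {V : Type*} [AddCommGroup V] [Module K V] (C : Submodule K (V × V))
    (hV : csharp C = Set.univ)
    {X Y : Type*} [AddCommGroup X] [Module K X] [AddCommGroup Y] [Module K Y]
    (p q : X →ₗ[K] Y)
    (iX : ↥C →ₗ[K] X) (iY : V →ₗ[K] Y) (πX : X →ₗ[K] K) (πY : Y →ₗ[K] K)
    (hiX : Function.Injective iX) (hiY : Function.Injective iY)
    (hπX : Function.Surjective πX) (hπY : Function.Surjective πY)
    (hexX : LinearMap.range iX = LinearMap.ker πX)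
    (hexY : LinearMap.range iY = LinearMap.ker πY)
    (hc1 : ∀ c : ↥C, p (iX c) = iY (c : V × V).1)
    (hc2 : ∀ c : ↥C, q (iX c) = iY (c : V × V).2)
    (hc3 : ∀ x : X, πY (p x) = πX x)
    (hc4 : ∀ x : X, πY (q x) = 0) :
    ∃ (sX : X →ₗ[K] ↥C) (sY : Y →ₗ[K] V),
      (∀ c : ↥C, sX (iX c) = c) ∧ (∀ v : V, sY (iY v) = v) ∧
      (∀ x : X, ((sX x : V × V)).1 = sY (p x)) ∧
      (∀ x : X, ((sX x : V × V)).2 = sY (q x)) := by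

  classical
  obtain ⟨x₀, hx₀⟩ := hπX 1
  have hqx₀ : πY (q x₀) = 0 := hc4 x₀
  obtain ⟨w, hw⟩ : q x₀ ∈ LinearMap.range iY := by
    rw [hexY]; exact hqx₀
  obtain ⟨f, hf, hf0⟩ : w ∈ csharp C := by rw [hV]; trivial
  have hC₀ : ((f (-1), w) : V × V) ∈ C := by
    have h := hf (-1)
    norm_num at h
    rwa [hf0] at h
  set c₀ : ↥C := ⟨(f (-1), w), hC₀⟩ with hc₀def
  set y₀ := p x₀ with hy₀
  have hy₀1 : πY y₀ = 1 := by rw [hy₀, hc3, hx₀]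
  let eX : ↥C ≃ₗ[K] LinearMap.ker πX :=
    (LinearEquiv.ofInjective iX hiX).trans (LinearEquiv.ofEq _ _ hexX)
  let eY : V ≃ₗ[K] LinearMap.ker πY :=
    (LinearEquiv.ofInjective iY hiY).trans (LinearEquiv.ofEq _ _ hexY)
  have memX : ∀ x : X, x - πX x • x₀ ∈ LinearMap.ker πX := by
    intro x; simp [hx₀]
  have memY : ∀ y : Y, y - πY y • y₀ ∈ LinearMap.ker πY := by
    intro y; simp [hy₀1]
  have heXval : ∀ c : ↥C, (↑(eX c) : X) = iX c := by
    intro c; simp [eX]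
  have heYval : ∀ v : V, (↑(eY v) : Y) = iY v := by
    intro v; simp [eY]
  have heX : ∀ (c : ↥C) (h : iX c ∈ LinearMap.ker πX), eX.symm ⟨iX c, h⟩ = c := by
    intro c h
    rw [LinearEquiv.symm_apply_eq]
    exact Subtype.ext (heXval c).symm
  have heY : ∀ (v : V) (h : iY v ∈ LinearMap.ker πY), eY.symm ⟨iY v, h⟩ = v := by
    intro v h
    rw [LinearEquiv.symm_apply_eq]
    exact Subtype.ext (heYval v).symm
  have heX' : ∀ s : LinearMap.ker πX, iX (eX.symm s) = (s : X) := by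
    intro s
    conv_rhs => rw [← eX.apply_symm_apply s]
    rw [heXval]
  let sX : X →ₗ[K] ↥C :=
    { toFun := fun x => eX.symm ⟨x - πX x • x₀, memX x⟩ + πX x • c₀
      map_add' := by
        intro a b
        have h : (⟨a + b - πX (a + b) • x₀, memX (a + b)⟩ : LinearMap.ker πX)
            = ⟨a - πX a • x₀, memX a⟩ + ⟨b - πX b • x₀, memX b⟩ := by
          ext
          push_cast
          rw [map_add, add_smul]
          abel
        rw [h, map_add, map_add, add_smul]
        abel
      map_smul' := by
        intro t a
        have h : (⟨t • a - πX (t • a) • x₀, memX (t • a)⟩ : LinearMap.ker πX)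
            = t • ⟨a - πX a • x₀, memX a⟩ := by
          ext
          push_cast
          rw [map_smul, smul_sub, smul_smul, smul_eq_mul]
        rw [h, map_smul, map_smul]
        simp [smul_add, mul_smul] }
  let sY : Y →ₗ[K] V :=
    { toFun := fun y => eY.symm ⟨y - πY y • y₀, memY y⟩ + πY y • f (-1)
      map_add' := by
        intro a b
        have h : (⟨a + b - πY (a + b) • y₀, memY (a + b)⟩ : LinearMap.ker πY)
            = ⟨a - πY a • y₀, memY a⟩ + ⟨b - πY b • y₀, memY b⟩ := by
          ext
          push_cast
          rw [map_add, add_smul]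
          abel
        rw [h, map_add, map_add, add_smul]
        abel
      map_smul' := by
        intro t a
        have h : (⟨t • a - πY (t • a) • y₀, memY (t • a)⟩ : LinearMap.ker πY)
            = t • ⟨a - πY a • y₀, memY a⟩ := by
          ext
          push_cast
          rw [map_smul, smul_sub, smul_smul, smul_eq_mul]
        rw [h, map_smul, map_smul]
        simp [smul_add, mul_smul] }
  have key : ∀ x : X, sX x = eX.symm ⟨x - πX x • x₀, memX x⟩ + πX x • c₀ := fun _ => rfl
  have keyY : ∀ y : Y, sY y = eY.symm ⟨y - πY y • y₀, memY y⟩ + πY y • f (-1) := fun _ => rfl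
  refine ⟨sX, sY, ?_, ?_, ?_, ?_⟩
  · intro c
    have h0 : πX (iX c) = 0 := by
      have : iX c ∈ LinearMap.ker πX := hexX ▸ LinearMap.mem_range_self _ _
      exact this
    rw [key]
    have h1 : (⟨iX c - πX (iX c) • x₀, memX (iX c)⟩ : LinearMap.ker πX)
        = ⟨iX c, by rw [← hexX]; exact LinearMap.mem_range_self _ _⟩ := by
      ext; simp [h0]
    rw [h1, heX, h0, zero_smul, add_zero]
  · intro v
    have h0 : πY (iY v) = 0 := by
      have : iY v ∈ LinearMap.ker πY := hexY ▸ LinearMap.mem_range_self _ _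
      exact this
    rw [keyY]
    have h1 : (⟨iY v - πY (iY v) • y₀, memY (iY v)⟩ : LinearMap.ker πY)
        = ⟨iY v, by rw [← hexY]; exact LinearMap.mem_range_self _ _⟩ := by
      ext; simp [h0]
    rw [h1, heY, h0, zero_smul, add_zero]
  · intro x
    set c : ↥C := eX.symm ⟨x - πX x • x₀, memX x⟩ with hc
    have hiXc : iX c = x - πX x • x₀ := heX' _
    have hπpx : πY (p x) = πX x := hc3 x
    have hval : p x - πY (p x) • y₀ = iY (c : V × V).1 := by
      rw [hπpx, hy₀, ← map_smul, ← map_sub, ← hiXc, hc1]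
    have h2 : eY.symm ⟨p x - πY (p x) • y₀, memY (p x)⟩ = (c : V × V).1 := by
      have h1 : (⟨p x - πY (p x) • y₀, memY (p x)⟩ : LinearMap.ker πY)
          = ⟨iY (c : V × V).1, by rw [← hexY]; exact LinearMap.mem_range_self _ _⟩ :=
        Subtype.ext hval
      rw [h1, heY]
    rw [key, keyY, h2, hπpx]
    simp [hc₀def]
    rfl
  · intro x
    set c : ↥C := eX.symm ⟨x - πX x • x₀, memX x⟩ with hc
    have hiXc : iX c = x - πX x • x₀ := heX' _
    have hπqx : πY (q x) = 0 := hc4 x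
    have hval : q x - πY (q x) • y₀ = iY ((c : V × V).2 + πX x • w) := by
      rw [hπqx, zero_smul, sub_zero, map_add, map_smul, hw, ← hc2, hiXc, map_sub, map_smul]
      abel
    have h2 : eY.symm ⟨q x - πY (q x) • y₀, memY (q x)⟩ = (c : V × V).2 + πX x • w := by
      have h1 : (⟨q x - πY (q x) • y₀, memY (q x)⟩ : LinearMap.ker πY)
          = ⟨iY ((c : V × V).2 + πX x • w), by rw [← hexY]; exact LinearMap.mem_range_self _ _⟩ :=
        Subtype.ext hval
      rw [h1, heY]
    rw [key, keyY, h2, hπqx]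
    simp [hc₀def]
    rfl
end

section
/- Let (V,C) be a linear relation with V = C^♯, and let M be a finite-dimensional indecomposable Kronecker module that is preprojective, 0-regular, or ∞-regular. Then Ext¹(M,(V,C)) = 0 in the category of Kronecker modules. -/
variable {K : Type*} [Field K]

namespace ExtAux

variable {V : Type*} [AddCommGroup V] [Module K V]

lemma total_of_csharp {C : Submodule K (V × V)} (hV : csharp C = Set.univ) (x : V) :
    ∃ y, (x, y) ∈ C := by
  have hx : x ∈ csharp C := hV ▸ Set.mem_univ x
  obtain ⟨f, hf, h0⟩ := hx
  refine ⟨f 1, ?_⟩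
  have := hf 0
  rwa [h0, zero_add] at this

lemma surj_of_csharp {C : Submodule K (V × V)} (hV : csharp C = Set.univ) (y : V) :
    ∃ x, (x, y) ∈ C := by
  have hx : y ∈ csharp C := hV ▸ Set.mem_univ y
  obtain ⟨f, hf, h0⟩ := hx
  refine ⟨f (-1), ?_⟩
  have := hf (-1)
  norm_num at this
  rwa [h0] at this

lemma forward_chain {C : Submodule K (V × V)} (hT : ∀ x : V, ∃ y, (x, y) ∈ C)
    (u w : ℕ → V) :
    ∃ f : ℕ → V, f 0 = 0 ∧ ∀ k, (f k + u k, f (k + 1) + w k) ∈ C := by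
  choose F hF using hT
  refine ⟨fun n => Nat.rec 0 (fun k vk => F (vk + u k) - w k) n, rfl, fun k => ?_⟩
  have := hF (Nat.rec (motive := fun _ => V) 0 (fun k vk => F (vk + u k) - w k) k + u k)
  simpa using this

lemma backward_chain {C : Submodule K (V × V)} (hS : ∀ y : V, ∃ x, (x, y) ∈ C)
    (u w : ℕ → V) (n : ℕ) :
    ∃ f : ℕ → V, (∀ k, n ≤ k → f k = 0) ∧ ∀ k < n, (f k + u k, f (k + 1) + w k) ∈ C := by
  choose F hF using hS
  set g : ℕ → V := fun m => Nat.rec 0 (fun m gm => F (gm + w (n - 1 - m)) - u (n - 1 - m)) m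
    with hg
  refine ⟨fun k => if n ≤ k then 0 else g (n - k), fun k hk => by simp [hk], fun k hk => ?_⟩
  have hklt : ¬ n ≤ k := by omega
  simp only [hklt, if_false]
  set m := n - k - 1 with hm
  have h1 : n - k = m + 1 := by omega
  have h2 : n - 1 - m = k := by omega
  have hgm : g (m + 1) = F (g m + w k) - u k := by rw [hg]; simp [h2]
  rw [h1, hgm]
  have hspec := hF (g m + w k)
  have h3 : (if n ≤ k + 1 then (0:V) else g (n - (k+1))) = g m := by
    by_cases h : n ≤ k + 1
    · have : m = 0 := by omega
      simp [h, this, hg]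
    · have : n - (k+1) = m := by omega
      simp [h, this]
  rw [h3, sub_add_cancel]
  exact hspec

lemma sum_ite_lt {b : ℕ} (v : ℕ → V) {m : ℕ} (hm : m < b) :
    ∑ j : Fin b, (if (j : ℕ) = m then (1:K) else 0) • v j = v m := by
  rw [Fintype.sum_eq_single (⟨m, hm⟩ : Fin b)]
  · simp
  · intro j hj
    have : (j : ℕ) ≠ m := fun h => hj (Fin.ext h)
    simp [this]

lemma sum_ite_ge {b : ℕ} (v : ℕ → V) {m : ℕ} (hm : b ≤ m) :
    ∑ j : Fin b, (if (j : ℕ) = m then (1:K) else 0) • v j = 0 := by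
  apply Finset.sum_eq_zero
  intro j _
  have : (j : ℕ) ≠ m := by have := j.isLt; omega
  simp [this]

lemma sum_ite_shift {b : ℕ} (v : ℕ → V) (h0 : v 0 = 0) {m : ℕ} (hm : m ≤ b) :
    ∑ j : Fin b, (if (j : ℕ) + 1 = m then (1:K) else 0) • v ((j : ℕ) + 1) = v m := by
  match m with
  | 0 =>
    rw [h0]
    apply Finset.sum_eq_zero
    intro j _
    simp
  | m + 1 =>
    rw [Fintype.sum_eq_single (⟨m, by omega⟩ : Fin b)]
    · simp
    · intro j hj
      have hne : (j : ℕ) ≠ m := fun h => hj (Fin.ext h)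
      have : (j : ℕ) + 1 ≠ m + 1 := by omega
      simp [this, hne]

def combo {ι : Type*} [Fintype ι] {M : Type*} [AddCommGroup M] [Module K M] (f : ι → M) :
    (ι → K) →ₗ[K] M where
  toFun g := ∑ i, g i • f i
  map_add' g h := by simp [add_smul, Finset.sum_add_distrib]
  map_smul' c g := by simp [Finset.smul_sum, smul_smul]

@[simp] lemma combo_apply {ι : Type*} [Fintype ι] {M : Type*} [AddCommGroup M] [Module K M]
    (f : ι → M) (g : ι → K) : combo f g = ∑ i, g i • f i := rfl

end ExtAux

/-- Let `(V,C)` be a linear relation with `V = C^♯`, and let `M` be a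
finite-dimensional indecomposable Kronecker module which is preprojective `Pₙ`,
0-regular `Zₙ` or ∞-regular `Rₙ` (described by its structure matrices `Ap`, `Aq`
in the standard bases). Then `Ext¹(M,(V,C)) = 0`: every extension of Kronecker
modules `0 → (C,V,pr₁,pr₂) → (X,Y,p,q) → M → 0` splits. -/
theorem ext_vanishes_preproj_regular
    {V : Type*} [AddCommGroup V] [Module K V] (C : Submodule K (V × V))
    (hV : csharp C = Set.univ)
    (a b : ℕ) (Ap Aq : Matrix (Fin b) (Fin a) K)
    (hM : -- preprojective Pₙ : dim X = n, dim Y = n+1, p xᵢ = yᵢ, q xᵢ = yᵢ₊₁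
      (b = a + 1 ∧ (∀ j i, Ap j i = if (j : ℕ) = (i : ℕ) then 1 else 0) ∧
        (∀ j i, Aq j i = if (j : ℕ) = (i : ℕ) + 1 then 1 else 0)) ∨
      -- 0-regular Zₙ (n ≥ 1) : p = id, q the nilpotent shift
      (b = a ∧ 1 ≤ a ∧ (∀ j i, Ap j i = if (j : ℕ) = (i : ℕ) then 1 else 0) ∧
        (∀ j i, Aq j i = if (j : ℕ) = (i : ℕ) + 1 then 1 else 0)) ∨
      -- ∞-regular Rₙ (n ≥ 1) : p the nilpotent shift, q = id
      (b = a ∧ 1 ≤ a ∧ (∀ j i, Ap j i = if (j : ℕ) + 1 = (i : ℕ) then 1 else 0) ∧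
        (∀ j i, Aq j i = if (j : ℕ) = (i : ℕ) then 1 else 0)))
    {X Y : Type*} [AddCommGroup X] [Module K X] [AddCommGroup Y] [Module K Y]
    (p q : X →ₗ[K] Y)
    (iX : ↥C →ₗ[K] X) (iY : V →ₗ[K] Y)
    (πX : X →ₗ[K] (Fin a → K)) (πY : Y →ₗ[K] (Fin b → K))
    (hiX : Function.Injective iX) (hiY : Function.Injective iY)
    (hπX : Function.Surjective πX) (hπY : Function.Surjective πY)
    (hexX : LinearMap.range iX = LinearMap.ker πX)
    (hexY : LinearMap.range iY = LinearMap.ker πY)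
    (hc1 : ∀ c : ↥C, p (iX c) = iY (c : V × V).1)
    (hc2 : ∀ c : ↥C, q (iX c) = iY (c : V × V).2)
    (hc3 : ∀ x : X, πY (p x) = Ap.mulVecLin (πX x))
    (hc4 : ∀ x : X, πY (q x) = Aq.mulVecLin (πX x)) :
    ∃ (sX : X →ₗ[K] ↥C) (sY : Y →ₗ[K] V),
      (∀ c : ↥C, sX (iX c) = c) ∧ (∀ v : V, sY (iY v) = v) ∧
      (∀ x : X, ((sX x : V × V)).1 = sY (p x)) ∧
      (∀ x : X, ((sX x : V × V)).2 = sY (q x)) := by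
  classical
  obtain ⟨tX, htX⟩ := πX.exists_rightInverse_of_surjective (LinearMap.range_eq_top.mpr hπX)
  obtain ⟨tY, htY⟩ := πY.exists_rightInverse_of_surjective (LinearMap.range_eq_top.mpr hπY)
  have htX' : ∀ g, πX (tX g) = g := fun g => DFunLike.congr_fun htX g
  have htY' : ∀ g, πY (tY g) = g := fun g => DFunLike.congr_fun htY g
  have hπiX : ∀ c : ↥C, πX (iX c) = 0 := by
    intro c
    have : iX c ∈ LinearMap.ker πX := hexX ▸ LinearMap.mem_range_self iX c
    exact this
  have hπiY : ∀ v : V, πY (iY v) = 0 := by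
    intro v
    have : iY v ∈ LinearMap.ker πY := hexY ▸ LinearMap.mem_range_self iY v
    exact this
  set ρX : X →ₗ[K] X := LinearMap.id - tX ∘ₗ πX with hρX
  set ρY : Y →ₗ[K] Y := LinearMap.id - tY ∘ₗ πY with hρY
  have hρXapp : ∀ x : X, ρX x = x - tX (πX x) := fun x => rfl
  have hρYapp : ∀ y : Y, ρY y = y - tY (πY y) := fun y => rfl
  have hkerX : ∀ x : X, ρX x ∈ LinearMap.range iX := by
    intro x
    rw [hexX]
    simp [hρXapp, map_sub, htX']
  have hkerY : ∀ y : Y, ρY y ∈ LinearMap.range iY := by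
    intro y
    rw [hexY]
    simp [hρYapp, map_sub, htY']
  set sX0 : X →ₗ[K] ↥C :=
    (LinearEquiv.ofInjective iX hiX).symm.toLinearMap ∘ₗ
      LinearMap.codRestrict (LinearMap.range iX) ρX hkerX with hsX0def
  set sY0 : Y →ₗ[K] V :=
    (LinearEquiv.ofInjective iY hiY).symm.toLinearMap ∘ₗ
      LinearMap.codRestrict (LinearMap.range iY) ρY hkerY with hsY0def
  have hiXsX0 : ∀ x : X, iX (sX0 x) = x - tX (πX x) := by
    intro x
    have h1 : ∀ z : LinearMap.range iX, iX ((LinearEquiv.ofInjective iX hiX).symm z) = z := by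
      intro z
      conv_rhs => rw [← (LinearEquiv.ofInjective iX hiX).apply_symm_apply z]
      rw [LinearEquiv.ofInjective_apply]
    rw [hsX0def]
    simp only [LinearMap.coe_comp, Function.comp_apply, LinearEquiv.coe_coe]
    rw [h1]
    rw [LinearMap.codRestrict_apply]
    exact hρXapp x
  have hiYsY0 : ∀ y : Y, iY (sY0 y) = y - tY (πY y) := by
    intro y
    have h1 : ∀ z : LinearMap.range iY, iY ((LinearEquiv.ofInjective iY hiY).symm z) = z := by
      intro z
      conv_rhs => rw [← (LinearEquiv.ofInjective iY hiY).apply_symm_apply z]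
      rw [LinearEquiv.ofInjective_apply]
    rw [hsY0def]
    simp only [LinearMap.coe_comp, Function.comp_apply, LinearEquiv.coe_coe]
    rw [h1]
    rw [LinearMap.codRestrict_apply]
    exact hρYapp y
  have hsX0iX : ∀ c : ↥C, sX0 (iX c) = c := by
    intro c
    apply hiX
    rw [hiXsX0, hπiX, map_zero, sub_zero]
  have hsY0iY : ∀ v : V, sY0 (iY v) = v := by
    intro v
    apply hiY
    rw [hiYsY0, hπiY, map_zero, sub_zero]
  have hT := ExtAux.total_of_csharp hV
  have hS := ExtAux.surj_of_csharp hV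
  set E : Fin a → X := fun i => tX (fun j => if i = j then 1 else 0) with hE
  obtain ⟨vv, hvv⟩ : ∃ vv : Fin b → V, ∀ i : Fin a,
      ((∑ j, Ap j i • vv j) + sY0 (p (E i)), (∑ j, Aq j i • vv j) + sY0 (q (E i))) ∈ C := by
    set u' : ℕ → V := fun k => if h : k < a then sY0 (p (E ⟨k, h⟩)) else 0 with hu'
    set w' : ℕ → V := fun k => if h : k < a then sY0 (q (E ⟨k, h⟩)) else 0 with hw'
    have hu'i : ∀ i : Fin a, u' (i : ℕ) = sY0 (p (E i)) := by
      intro i; simp [hu', i.isLt]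
    have hw'i : ∀ i : Fin a, w' (i : ℕ) = sY0 (q (E i)) := by
      intro i; simp [hw', i.isLt]
    rcases hM with ⟨hb, hAp, hAq⟩ | ⟨hb, ha, hAp, hAq⟩ | ⟨hb, ha, hAp, hAq⟩
    · subst hb
      obtain ⟨f, hf0, hf⟩ := ExtAux.forward_chain hT u' w'
      refine ⟨fun j => f j, fun i => ?_⟩
      have h1 : (∑ j : Fin (a+1), Ap j i • f (j : ℕ)) = f (i : ℕ) := by
        simp only [hAp]
        exact ExtAux.sum_ite_lt f (by omega)
      have h2 : (∑ j : Fin (a+1), Aq j i • f (j : ℕ)) = f ((i : ℕ) + 1) := by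
        simp only [hAq]
        exact ExtAux.sum_ite_lt f (by omega)
      rw [h1, h2, ← hu'i i, ← hw'i i]
      exact hf i
    · subst hb
      obtain ⟨f, hf0, hf⟩ := ExtAux.backward_chain hS u' w' b
      refine ⟨fun j => f j, fun i => ?_⟩
      have h1 : (∑ j : Fin b, Ap j i • f (j : ℕ)) = f (i : ℕ) := by
        simp only [hAp]
        exact ExtAux.sum_ite_lt f i.isLt
      have h2 : (∑ j : Fin b, Aq j i • f (j : ℕ)) = f ((i : ℕ) + 1) := by
        simp only [hAq]
        by_cases h : (i : ℕ) + 1 < b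
        · exact ExtAux.sum_ite_lt f h
        · rw [ExtAux.sum_ite_ge f (by omega), hf0 _ (by omega)]
      rw [h1, h2, ← hu'i i, ← hw'i i]
      exact hf i i.isLt
    · subst hb
      obtain ⟨f, hf0, hf⟩ := ExtAux.forward_chain hT u' w'
      refine ⟨fun j => f ((j : ℕ) + 1), fun i => ?_⟩
      have h1 : (∑ j : Fin b, Ap j i • f ((j : ℕ) + 1)) = f (i : ℕ) := by
        simp only [hAp]
        exact ExtAux.sum_ite_shift f hf0 (le_of_lt i.isLt)
      have h2 : (∑ j : Fin b, Aq j i • f ((j : ℕ) + 1)) = f ((i : ℕ) + 1) := by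
        simp only [hAq]
        exact ExtAux.sum_ite_lt (fun k => f (k + 1)) i.isLt
      rw [h1, h2, ← hu'i i, ← hw'i i]
      exact hf i
  obtain ⟨cc, hccval⟩ : ∃ cc : Fin a → ↥C, ∀ i : Fin a, (cc i : V × V) =
      ((∑ j, Ap j i • vv j) + sY0 (p (E i)), (∑ j, Aq j i • vv j) + sY0 (q (E i))) :=
    ⟨fun i => ⟨_, hvv i⟩, fun i => rfl⟩
  have main : ∀ (P : X →ₗ[K] Y) (AP : Matrix (Fin b) (Fin a) K) (pr : (V × V) →ₗ[K] V),
      (∀ c : ↥C, P (iX c) = iY (pr (c : V × V))) →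
      (∀ x : X, πY (P x) = AP.mulVecLin (πX x)) →
      (∀ i : Fin a, pr ((cc i : V × V)) = (∑ j, AP j i • vv j) + sY0 (P (E i))) →
      ∀ x : X, pr ((sX0 x + ExtAux.combo cc (πX x) : ↥C) : V × V)
        = sY0 (P x) + ExtAux.combo vv (πY (P x)) := by
    intro P AP pr hcP hcmat hccpr x
    have hx : iX (sX0 x) + tX (πX x) = x := by rw [hiXsX0]; abel
    have hty : tX (πX x) = ∑ i, (πX x) i • E i := by
      conv_lhs => rw [pi_eq_sum_univ (πX x)]
      rw [map_sum]
      simp only [map_smul]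
      rfl
    have hPx : P x = iY (pr ((sX0 x : V × V))) + P (tX (πX x)) := by
      conv_lhs => rw [← hx]
      rw [map_add, hcP]
    have h1 : sY0 (P x) = pr ((sX0 x : V × V)) + ∑ i, (πX x) i • sY0 (P (E i)) := by
      rw [hPx, map_add, hsY0iY, hty, map_sum, map_sum]
      simp only [map_smul]
    have h2 : ExtAux.combo vv (πY (P x)) = ∑ i, (πX x) i • ∑ j, AP j i • vv j := by
      rw [hcmat x, ExtAux.combo_apply]
      have hmv : ∀ j, AP.mulVecLin (πX x) j = ∑ i, AP j i * (πX x) i := by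
        intro j
        simp [Matrix.mulVecLin_apply, Matrix.mulVec, dotProduct]
      calc ∑ j, AP.mulVecLin (πX x) j • vv j
          = ∑ j, ∑ i, (AP j i * (πX x) i) • vv j := by
            refine Finset.sum_congr rfl fun j _ => ?_
            rw [hmv j, Finset.sum_smul]
        _ = ∑ i, ∑ j, (AP j i * (πX x) i) • vv j := Finset.sum_comm
        _ = ∑ i, (πX x) i • ∑ j, AP j i • vv j := by
            refine Finset.sum_congr rfl fun i _ => ?_
            rw [Finset.smul_sum]
            refine Finset.sum_congr rfl fun j _ => ?_
            rw [mul_comm (AP j i) (πX x i), mul_smul]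
    have h3 : pr ((sX0 x + ExtAux.combo cc (πX x) : ↥C) : V × V)
        = pr ((sX0 x : V × V)) + ∑ i, (πX x) i • pr ((cc i : V × V)) := by
      rw [Submodule.coe_add, map_add]
      congr 1
      have hco : ((ExtAux.combo cc (πX x) : ↥C) : V × V)
          = ∑ i, (πX x) i • ((cc i : V × V)) := by
        rw [ExtAux.combo_apply, Submodule.coe_sum]
        simp
      rw [hco, map_sum]
      simp only [map_smul]
    rw [h3, h1, h2]
    simp only [hccpr, smul_add, Finset.sum_add_distrib]
    abel
  refine ⟨sX0 + ExtAux.combo cc ∘ₗ πX, sY0 + ExtAux.combo vv ∘ₗ πY, ?_, ?_, ?_, ?_⟩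
  · intro c
    simp only [LinearMap.add_apply, LinearMap.coe_comp, Function.comp_apply, hπiX c,
      map_zero, add_zero]
    exact hsX0iX c
  · intro v
    simp only [LinearMap.add_apply, LinearMap.coe_comp, Function.comp_apply, hπiY v,
      map_zero, add_zero]
    exact hsY0iY v
  · intro x
    exact main p Ap (LinearMap.fst K V V) hc1 hc3
      (fun i => by rw [hccval i]; rfl) x
  · intro x
    exact main q Aq (LinearMap.snd K V V) hc2 hc4
      (fun i => by rw [hccval i]; rfl) x
end

section
/- Let (V,C) be a linear relation and let M = I_n be a finite-dimensional preinjective Kronecker module (n ≥ 0). Then every morphism of Kronecker modules M → (V/C^♭, C/C|_{C^♭}) is zero, where the target is the quotient relation with underlying space V/C^♭ and relation the image of C in (V/C^♭)⊕(V/C^♭). -/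
variable {K : Type*} [Field K]

section Aux
variable {V : Type*} [AddCommGroup V] [Module K V] {C : Submodule K (V × V)}

/-- right-infinite chains -/
def Rinf (C : Submodule K (V × V)) : Set V :=
  {v | ∃ f : ℕ → V, f 0 = v ∧ ∀ k, (f k, f (k + 1)) ∈ C}

/-- left half chains, eventually zero -/
def Lfin (C : Submodule K (V × V)) : Set V :=
  {v | ∃ f : ℕ → V, f 0 = v ∧ (∀ k, (f (k + 1), f k) ∈ C) ∧ ∃ N : ℕ, ∀ k ≥ N, f k = 0}

lemma cplus_neg {a : V} (ha : a ∈ cplus C) : -a ∈ cplus C := by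
  obtain ⟨f, hf, hf0, N, hN⟩ := ha
  refine ⟨fun k => -f k, fun k => C.neg_mem (hf k), show -f 0 = -a by rw [hf0],
    N, fun k hk => show -f k = 0 from ?_⟩
  rw [hN k hk, neg_zero]

lemma cminus_neg {a : V} (ha : a ∈ cminus C) : -a ∈ cminus C := by
  obtain ⟨f, hf, hf0, N, hN⟩ := ha
  refine ⟨fun k => -f k, fun k => C.neg_mem (hf k), show -f 0 = -a by rw [hf0],
    N, fun k hk => show -f k = 0 from ?_⟩
  rw [hN k hk, neg_zero]

lemma cplus_mem_Rinf {a : V} (ha : a ∈ cplus C) : a ∈ Rinf C := by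
  obtain ⟨f, hf, hf0, _⟩ := ha
  exact ⟨fun k => f k, by exact_mod_cast hf0, fun k => by exact_mod_cast hf k⟩

lemma cminus_mem_Rinf {a : V} (ha : a ∈ cminus C) : a ∈ Rinf C := by
  obtain ⟨f, hf, hf0, _⟩ := ha
  exact ⟨fun k => f k, by exact_mod_cast hf0, fun k => by exact_mod_cast hf k⟩

lemma cminus_mem_Lfin {a : V} (ha : a ∈ cminus C) : a ∈ Lfin C := by
  obtain ⟨f, hf, hf0, N, hN⟩ := ha
  refine ⟨fun k => f (-k), by simpa using hf0, fun k => ?_, N.natAbs + 1,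
    fun k hk => show f (-k) = 0 from hN _ (by omega)⟩
  show (f (-(k + 1) : ℤ), f (-k)) ∈ C
  have h := hf (-(k + 1 : ℕ))
  have e : (-(k + 1 : ℕ) : ℤ) + 1 = -(k : ℕ) := by push_cast; ring
  rwa [e] at h

lemma Rinf_add {a b : V} (ha : a ∈ Rinf C) (hb : b ∈ Rinf C) : a + b ∈ Rinf C := by
  obtain ⟨f, hf0, hf⟩ := ha
  obtain ⟨g, hg0, hg⟩ := hb
  exact ⟨fun k => f k + g k, show f 0 + g 0 = a + b by rw [hf0, hg0],
    fun k => C.add_mem (hf k) (hg k)⟩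

lemma Rinf_neg {a : V} (ha : a ∈ Rinf C) : -a ∈ Rinf C := by
  obtain ⟨f, hf0, hf⟩ := ha
  exact ⟨fun k => -f k, show -f 0 = -a by rw [hf0], fun k => C.neg_mem (hf k)⟩

lemma Rinf_sub {a b : V} (ha : a ∈ Rinf C) (hb : b ∈ Rinf C) : a - b ∈ Rinf C := by
  rw [sub_eq_add_neg]; exact Rinf_add ha (Rinf_neg hb)

lemma Rinf_prepend {a b : V} (hab : (a, b) ∈ C) (hb : b ∈ Rinf C) : a ∈ Rinf C := by
  obtain ⟨f, hf0, hf⟩ := hb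
  refine ⟨fun k => Nat.casesOn k a f, rfl, fun k => ?_⟩
  cases k with
  | zero => simpa [hf0] using hab
  | succ k => exact hf k

lemma Lfin_add {a b : V} (ha : a ∈ Lfin C) (hb : b ∈ Lfin C) : a + b ∈ Lfin C := by
  obtain ⟨f, hf0, hf, N, hN⟩ := ha
  obtain ⟨g, hg0, hg, M, hM⟩ := hb
  refine ⟨fun k => f k + g k, show f 0 + g 0 = a + b by rw [hf0, hg0],
    fun k => C.add_mem (hf k) (hg k),
    max N M, fun k hk => show f k + g k = 0 from ?_⟩
  rw [hN k (le_trans (le_max_left _ _) hk), hM k (le_trans (le_max_right _ _) hk), add_zero]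

lemma Lfin_prepend {a b : V} (hab : (a, b) ∈ C) (ha : a ∈ Lfin C) : b ∈ Lfin C := by
  obtain ⟨f, hf0, hf, N, hN⟩ := ha
  refine ⟨fun k => Nat.casesOn k b (fun j => f j), rfl, fun k => ?_, N + 1, fun k hk => ?_⟩
  · cases k with
    | zero => simpa [hf0] using hab
    | succ k => exact hf k
  · match k, hk with
    | (k + 1), hk => exact hN k (by omega)

/-- shifting a `cplus` chain one step to the right -/
lemma cplus_shift {f : ℤ → V} (hf : IsCChain C f) (hz : ∃ N : ℤ, ∀ n ≥ N, f n = 0) :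
    f 1 ∈ cplus C := by
  obtain ⟨N, hN⟩ := hz
  exact ⟨fun k => f (k + 1), fun k => hf (k + 1), rfl, N,
    fun k hk => show f (k + 1) = 0 from hN _ (by omega)⟩

/-- shifting a `cminus` chain one step to the left -/
lemma cminus_shift {f : ℤ → V} (hf : IsCChain C f) (hz : ∃ N : ℤ, ∀ n ≤ N, f n = 0) :
    f (-1) ∈ cminus C := by
  obtain ⟨N, hN⟩ := hz
  refine ⟨fun k => f (k - 1), fun k => ?_, show f (0 - 1 : ℤ) = f (-1) by norm_num, N,
    fun k hk => show f (k - 1) = 0 from hN _ (by omega)⟩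
  show (f (k - 1), f (k + 1 - 1)) ∈ C
  have e : k + 1 - 1 = k - 1 + 1 := by ring
  rw [e]
  exact hf _

/-- Gluing: a left half chain which is eventually zero, whose endpoint also continues
to an infinite chain on the right, witnesses membership in `C₋`. -/
lemma glue_mem_cminus {a : V} (hL : a ∈ Lfin C) (hR : a ∈ Rinf C) : a ∈ cminus C := by
  obtain ⟨h, hh0, hh, N, hN⟩ := hL
  obtain ⟨r, hr0, hr⟩ := hR
  refine ⟨fun k => if k ≤ 0 then h (-k).toNat else r k.toNat, fun k => ?_, by simpa using hh0,
    -(N : ℤ) - 1, fun k hk => ?_⟩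
  · show ((if k ≤ 0 then h (-k).toNat else r k.toNat),
      (if k + 1 ≤ 0 then h (-(k + 1)).toNat else r (k + 1).toNat)) ∈ C
    rcases lt_trichotomy k 0 with hk | hk | hk
    · have e1 : k ≤ 0 := by omega
      have e2 : k + 1 ≤ 0 := by omega
      have e3 : (-k).toNat = (-(k + 1)).toNat + 1 := by omega
      rw [if_pos e1, if_pos e2, e3]
      exact hh _
    · subst hk
      rw [if_pos le_rfl, if_neg (by omega)]
      have e : ((0:ℤ) + 1).toNat = 1 := by omega
      rw [e]
      show (h (-(0:ℤ)).toNat, r 1) ∈ C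
      have e2 : (-(0:ℤ)).toNat = 0 := by omega
      rw [e2, hh0, ← hr0]
      exact hr 0
    · have e1 : ¬ k ≤ 0 := by omega
      have e2 : ¬ k + 1 ≤ 0 := by omega
      have e3 : (k + 1).toNat = k.toNat + 1 := by omega
      rw [if_neg e1, if_neg e2, e3]
      exact hr _
  · show (if k ≤ 0 then h (-k).toNat else r k.toNat) = 0
    rw [if_pos (by omega : k ≤ 0)]
    exact hN _ (by omega)

/-- main combination lemma -/
lemma mem_cflat_of_fwd_bwd {v : V}
    (h1 : ∃ p ∈ cplus C, v - p ∈ Lfin C)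
    (h2 : ∃ m ∈ cminus C, v - m ∈ Rinf C) : v ∈ cflat C := by
  obtain ⟨p, hp, hμ⟩ := h1
  obtain ⟨m, hm, hr⟩ := h2
  have hμR : v - p ∈ Rinf C := by
    have e : v - p = m + (v - m) - p := by abel
    rw [e]
    exact Rinf_sub (Rinf_add (cminus_mem_Rinf hm) hr) (cplus_mem_Rinf hp)
  exact ⟨p, hp, v - p, glue_mem_cminus hμ hμR, by abel⟩

/-- forward step -/
lemma fwd_step {a b : V} (hab : (a, b) ∈ C)
    (h : ∃ p ∈ cplus C, a - p ∈ Lfin C) : ∃ p ∈ cplus C, b - p ∈ Lfin C := by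
  obtain ⟨p, ⟨f, hf, hf0, hz⟩, hμ⟩ := h
  refine ⟨f 1, cplus_shift hf hz, ?_⟩
  have hstep : (a - p, b - f 1) ∈ C := by
    have h01 := hf 0
    rw [show (0:ℤ) + 1 = 1 by ring, hf0] at h01
    have := C.sub_mem hab h01
    simpa using this
  exact Lfin_prepend hstep hμ

/-- forward stability under adding a flat element -/
lemma fwd_flat {a s : V} (h : ∃ p ∈ cplus C, a - p ∈ Lfin C) (hs : s ∈ cflat C) :
    ∃ p ∈ cplus C, (a + s) - p ∈ Lfin C := by
  obtain ⟨p, hp, hμ⟩ := h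
  obtain ⟨ps, hps, ms, hms, hse⟩ := hs
  refine ⟨p + ps, cplus_add hp hps, ?_⟩
  have e : (a + s) - (p + ps) = (a - p) + ms := by rw [hse]; abel
  rw [e]
  exact Lfin_add hμ (cminus_mem_Lfin hms)

/-- backward step -/
lemma bwd_step {a b : V} (hab : (a, b) ∈ C)
    (h : ∃ m ∈ cminus C, b - m ∈ Rinf C) : ∃ m ∈ cminus C, a - m ∈ Rinf C := by
  obtain ⟨m, ⟨g, hg, hg0, hz⟩, hr⟩ := h
  refine ⟨g (-1), cminus_shift hg hz, ?_⟩
  have hstep : (a - g (-1), b - m) ∈ C := by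
    have h01 := hg (-1)
    rw [show (-1:ℤ) + 1 = 0 by ring, hg0] at h01
    have := C.sub_mem hab h01
    simpa using this
  exact Rinf_prepend hstep hr

/-- backward stability under adding a flat element -/
lemma bwd_flat {b s : V} (h : ∃ m ∈ cminus C, b - m ∈ Rinf C) (hs : s ∈ cflat C) :
    ∃ m ∈ cminus C, (b + s) - m ∈ Rinf C := by
  obtain ⟨m, hm, hr⟩ := h
  obtain ⟨ps, hps, ms, hms, hse⟩ := hs
  refine ⟨m + ms, cminus_add hm hms, ?_⟩
  have e : (b + s) - (m + ms) = (b - m) + ps := by rw [hse]; abel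
  rw [e]
  exact Rinf_add hr (cplus_mem_Rinf hps)

lemma cflat_neg {s : V} (hs : s ∈ cflat C) : -s ∈ cflat C := by
  obtain ⟨ps, hps, ms, hms, hse⟩ := hs
  exact ⟨-ps, cplus_neg hps, -ms, cminus_neg hms, by rw [hse]; abel⟩

lemma fwd_of_flat {v : V} (hv : v ∈ cflat C) : ∃ p ∈ cplus C, v - p ∈ Lfin C := by
  obtain ⟨p, hp, m, hm, he⟩ := hv
  exact ⟨p, hp, by rw [he, add_sub_cancel_left]; exact cminus_mem_Lfin hm⟩

lemma bwd_of_flat {v : V} (hv : v ∈ cflat C) : ∃ m ∈ cminus C, v - m ∈ Rinf C := by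
  obtain ⟨p, hp, m, hm, he⟩ := hv
  exact ⟨m, hm, by rw [he, add_sub_cancel_right]; exact cplus_mem_Rinf hp⟩

/-- The main combinatorial lemma: a finite chain in `C` which starts and ends in the flat part
(modulo flat jumps at each step) lies entirely in the flat part. -/
lemma chain_in_flat (C : Submodule K (V × V)) (n : ℕ) (c d : ℕ → V)
    (hcd : ∀ i ≤ n, (c i, d i) ∈ C)
    (h0 : c 0 ∈ cflat C) (hn : d n ∈ cflat C)
    (hlink : ∀ i < n, d i - c (i + 1) ∈ cflat C) :
    ∀ i ≤ n, c i ∈ cflat C := by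
  have hF : ∀ i ≤ n, ∃ p ∈ cplus C, c i - p ∈ Lfin C := by
    intro i
    induction i with
    | zero => exact fun _ => fwd_of_flat h0
    | succ i ih =>
      intro hi
      have hdi := fwd_step (hcd i (by omega)) (ih (by omega))
      have hs : c (i + 1) - d i ∈ cflat C := by
        have e : c (i + 1) - d i = -(d i - c (i + 1)) := by abel
        rw [e]
        exact cflat_neg (hlink i (by omega))
      have h2 := fwd_flat hdi hs
      have e : d i + (c (i + 1) - d i) = c (i + 1) := by abel
      rwa [e] at h2
  have hB : ∀ j ≤ n, ∃ m ∈ cminus C, c (n - j) - m ∈ Rinf C := by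
    intro j
    induction j with
    | zero =>
      intro _
      simpa using bwd_step (hcd n le_rfl) (bwd_of_flat hn)
    | succ j ih =>
      intro hj
      have hc := ih (by omega)
      have e1 : n - (j + 1) + 1 = n - j := by omega
      have hd : ∃ m ∈ cminus C, d (n - (j + 1)) - m ∈ Rinf C := by
        have hs := hlink (n - (j + 1)) (by omega)
        rw [e1] at hs
        have h2 := bwd_flat hc hs
        have e : c (n - j) + (d (n - (j + 1)) - c (n - j)) = d (n - (j + 1)) := by abel
        rwa [e] at h2
      exact bwd_step (hcd (n - (j + 1)) (by omega)) hd
  intro i hi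
  have hb := hB (n - i) (by omega)
  rw [show n - (n - i) = i by omega] at hb
  exact mem_cflat_of_fwd_bwd (hF i hi) hb

end Aux

/-- Every morphism of Kronecker modules from the preinjective module `Iₙ`
(with `X`-basis `x₀,…,xₙ`, `Y`-basis `y₁,…,yₙ`, `p xᵢ = yᵢ`, `q xᵢ = yᵢ₊₁`) to the
quotient relation `(V/C^♭, C/C|_{C^♭})` is zero. The quotient relation is realized
as the image `D` of `C` in `(V/C^♭) ⊕ (V/C^♭)`, whose relation module has `X`-space
`D ≅ C/C|_{C^♭}` and `Y`-space `V/C^♭`. -/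
theorem no_map_In_to_quotient_by_flat
    {V : Type*} [AddCommGroup V] [Module K V] (C : Submodule K (V × V))
    (Sflat : Submodule K V) (hSf : (Sflat : Set V) = cflat C) (n : ℕ)
    (P Q : Matrix (Fin n) (Fin (n + 1)) K)
    (hP : ∀ j i, P j i = if (j : ℕ) + 1 = (i : ℕ) then 1 else 0)
    (hQ : ∀ j i, Q j i = if (j : ℕ) = (i : ℕ) then 1 else 0)
    (θ : (Fin (n + 1) → K) →ₗ[K] ↥(C.map (Sflat.mkQ.prodMap Sflat.mkQ)))
    (φ : (Fin n → K) →ₗ[K] V ⧸ Sflat)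
    (h1 : ∀ x, ((θ x : (V ⧸ Sflat) × (V ⧸ Sflat))).1 = φ (P.mulVecLin x))
    (h2 : ∀ x, ((θ x : (V ⧸ Sflat) × (V ⧸ Sflat))).2 = φ (Q.mulVecLin x)) :
    θ = 0 ∧ φ = 0 := by
  classical
  set A : ℕ → V ⧸ Sflat := fun k =>
    if h : 1 ≤ k ∧ k ≤ n then φ (Pi.single (⟨k - 1, by omega⟩ : Fin n) 1) else 0 with hA
  -- the two matrix computations
  have hPA : ∀ i : Fin (n + 1), φ (P.mulVecLin (Pi.single i 1)) = A (i : ℕ) := by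
    intro i
    by_cases h : 1 ≤ (i : ℕ) ∧ (i : ℕ) ≤ n
    · have hv : P.mulVecLin (Pi.single i 1) =
          Pi.single (⟨(i : ℕ) - 1, by omega⟩ : Fin n) (1 : K) := by
        rw [Matrix.mulVecLin_apply, Matrix.mulVec_single]
        funext j
        change P j i * 1 = _
        rw [hP j i, mul_one, Pi.single_apply]
        by_cases hji : (j : ℕ) + 1 = (i : ℕ)
        · exact (if_pos hji).trans (if_pos (Fin.ext (show (j : ℕ) = (i : ℕ) - 1 by omega))).symm
        · refine (if_neg hji).trans (if_neg fun hc => hji ?_).symm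
          have : (j : ℕ) = (i : ℕ) - 1 := congrArg Fin.val hc
          omega
      rw [hv, hA]
      simp only []
      rw [dif_pos h]
    · have hi0 : (i : ℕ) = 0 := by have := i.isLt; omega
      have hv : P.mulVecLin (Pi.single i 1) = 0 := by
        rw [Matrix.mulVecLin_apply, Matrix.mulVec_single]
        funext j
        change P j i * 1 = _
        rw [hP j i, mul_one, if_neg (by omega)]
        rfl
      rw [hv, map_zero, hA]
      simp only []
      rw [dif_neg h]
  have hQA : ∀ i : Fin (n + 1), φ (Q.mulVecLin (Pi.single i 1)) = A ((i : ℕ) + 1) := by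
    intro i
    by_cases h : (i : ℕ) < n
    · have hv : Q.mulVecLin (Pi.single i 1) =
          Pi.single (⟨(i : ℕ), h⟩ : Fin n) (1 : K) := by
        rw [Matrix.mulVecLin_apply, Matrix.mulVec_single]
        funext j
        change Q j i * 1 = _
        rw [hQ j i, mul_one, Pi.single_apply]
        by_cases hji : (j : ℕ) = (i : ℕ)
        · exact (if_pos hji).trans (if_pos (Fin.ext hji)).symm
        · exact (if_neg hji).trans (if_neg fun hc => hji (congrArg Fin.val hc)).symm
      rw [hv, hA]
      simp only []
      rw [dif_pos (by omega)]
      have e : (⟨(i : ℕ) + 1 - 1, by omega⟩ : Fin n) = ⟨(i : ℕ), h⟩ :=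
        Fin.ext (Nat.add_sub_cancel _ _)
      rw [e]
    · have hin : (i : ℕ) = n := by have := i.isLt; omega
      have hv : Q.mulVecLin (Pi.single i 1) = 0 := by
        rw [Matrix.mulVecLin_apply, Matrix.mulVec_single]
        funext j
        change Q j i * 1 = _
        rw [hQ j i, mul_one, if_neg (by have := j.isLt; omega)]
        rfl
      rw [hv, map_zero, hA]
      simp only []
      rw [dif_neg (by omega)]
  -- extract the chain data
  have hD : ∀ k : ℕ, ∃ pr : V × V, k ≤ n →
      (pr ∈ C ∧ Sflat.mkQ pr.1 = A k ∧ Sflat.mkQ pr.2 = A (k + 1)) := by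
    intro k
    by_cases hk : k ≤ n
    · set i : Fin (n + 1) := ⟨k, by omega⟩ with hi
      have hmem : ((θ (Pi.single i 1) : ((V ⧸ Sflat) × (V ⧸ Sflat)))) ∈
          C.map (Sflat.mkQ.prodMap Sflat.mkQ) := (θ (Pi.single i 1)).2
      obtain ⟨y, hy, hmap⟩ := Submodule.mem_map.mp hmem
      refine ⟨y, fun _ => ⟨hy, ?_, ?_⟩⟩
      · have : Sflat.mkQ y.1 = ((θ (Pi.single i 1) : ((V ⧸ Sflat) × (V ⧸ Sflat)))).1 := by
          rw [← hmap]; rfl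
        rw [this, h1, hPA i]
      · have : Sflat.mkQ y.2 = ((θ (Pi.single i 1) : ((V ⧸ Sflat) × (V ⧸ Sflat)))).2 := by
          rw [← hmap]; rfl
        rw [this, h2, hQA i]
    · exact ⟨0, fun h => absurd h hk⟩
  choose pr hpr using hD
  have hmkzero : ∀ x : V, Sflat.mkQ x = 0 → x ∈ cflat C := by
    intro x hx
    rw [← hSf]
    exact (Submodule.Quotient.mk_eq_zero Sflat).mp hx
  have hchain := chain_in_flat C n (fun k => (pr k).1) (fun k => (pr k).2)
    (fun i hi => ((hpr i hi).1))
    (by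
      apply hmkzero
      rw [(hpr 0 (by omega)).2.1, hA]
      simp)
    (by
      apply hmkzero
      rw [(hpr n le_rfl).2.2, hA]
      simp only []
      rw [dif_neg (by omega)])
    (by
      intro i hi
      apply hmkzero
      rw [map_sub, (hpr i (by omega)).2.2, (hpr (i + 1) (by omega)).2.1, sub_self])
  -- hence all the A-values vanish
  have hAzero : ∀ k ≤ n, A k = 0 := by
    intro k hk
    rw [← (hpr k hk).2.1]
    have : (pr k).1 ∈ (Sflat : Set V) := by rw [hSf]; exact hchain k hk
    exact (Submodule.Quotient.mk_eq_zero Sflat).mpr this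
  have hφsingle : ∀ j : Fin n, φ (Pi.single j (1 : K)) = 0 := by
    intro j
    have h := hAzero ((j : ℕ) + 1) (by omega)
    rw [hA] at h
    simp only [] at h
    rw [dif_pos (by omega)] at h
    have e : (⟨(j : ℕ) + 1 - 1, by omega⟩ : Fin n) = j := Fin.ext (Nat.add_sub_cancel _ _)
    rw [e] at h
    exact h
  have hφ : φ = 0 := by
    apply LinearMap.ext
    intro x
    have hx : ∑ j, Pi.single j (x j) = x := Finset.univ_sum_single x
    rw [← hx, map_sum]
    refine Finset.sum_eq_zero fun j _ => ?_
    have e : Pi.single j (x j) = x j • (Pi.single j (1 : K) : Fin n → K) := by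
      rw [← Pi.single_smul, smul_eq_mul, mul_one]
    rw [e, map_smul, hφsingle, smul_zero]
  refine ⟨?_, hφ⟩
  apply LinearMap.ext
  intro x
  have hval : ((θ x : ((V ⧸ Sflat) × (V ⧸ Sflat)))) = 0 := by
    have e1 := h1 x
    have e2 := h2 x
    rw [hφ] at e1 e2
    simp only [LinearMap.zero_apply] at e1 e2
    exact Prod.ext e1 e2
  exact Subtype.ext hval
end

section
/- Let (V,C) be a linear relation and let M be a finite-dimensional automorphic regular Kronecker module (p and q both isomorphisms). Then every morphism of Kronecker modules M → (V/C^♯, C/C|_{C^♯}) is zero. -/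
variable {K : Type*} [Field K]

section AuxChain

lemma shift_chain {V : Type*} [AddCommGroup V] [Module K V]
    (C : Submodule K (V × V)) {h : ℤ → V} (hh : IsCChain C h) (k : ℤ) :
    IsCChain C (fun m => h (m + k)) := by
  intro n
  have := hh (n + k)
  have e : n + k + 1 = n + 1 + k := by ring
  rw [e] at this
  exact this

lemma mem_csharp_shift {V : Type*} [AddCommGroup V] [Module K V]
    (C : Submodule K (V × V)) {h : ℤ → V} (hh : IsCChain C h) (k : ℤ) :
    h k ∈ csharp C :=
  ⟨fun m => h (m + k), shift_chain C hh k, by simp⟩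

noncomputable def natChain {α : Type*} (P : ℕ → α → Prop) (R : α → α → Prop)
    (a0 : {a // P 0 a}) (step : ∀ n a, P n a → ∃ b, R a b ∧ P (n + 1) b) :
    ∀ n, {a // P n a}
  | 0 => a0
  | n + 1 =>
    ⟨(step n (natChain P R a0 step n).1 (natChain P R a0 step n).2).choose,
      (step n (natChain P R a0 step n).1 (natChain P R a0 step n).2).choose_spec.2⟩

lemma natChain_rel {α : Type*} (P : ℕ → α → Prop) (R : α → α → Prop)
    (a0 : {a // P 0 a}) (step : ∀ n a, P n a → ∃ b, R a b ∧ P (n + 1) b) (n : ℕ) :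
    R (natChain P R a0 step n).1 (natChain P R a0 step (n + 1)).1 :=
  (step n (natChain P R a0 step n).1 (natChain P R a0 step n).2).choose_spec.1

end AuxChain

section Steps

variable {V : Type*} [AddCommGroup V] [Module K V]

lemma step_fwd (C : Submodule K (V × V)) (Ssharp : Submodule K V)
    (hSs : (Ssharp : Set V) = csharp C) (f : ℤ → V ⧸ Ssharp)
    (hf : IsCChain (C.map (Ssharp.mkQ.prodMap Ssharp.mkQ)) f)
    (n : ℤ) (v : V) (hv : Ssharp.mkQ v = f n) :
    ∃ v', (v, v') ∈ C ∧ Ssharp.mkQ v' = f (n + 1) := by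
  obtain ⟨⟨a, b⟩, hab, heq⟩ := hf n
  have ha : Ssharp.mkQ a = f n := congrArg Prod.fst heq
  have hb : Ssharp.mkQ b = f (n + 1) := congrArg Prod.snd heq
  have hva : v - a ∈ Ssharp := by
    rw [← Submodule.Quotient.mk_eq_zero]
    show Ssharp.mkQ (v - a) = 0
    rw [map_sub, hv, ha, sub_self]
  have hva' : v - a ∈ csharp C := by rw [← hSs] at *; exact hva
  obtain ⟨h, hch, h0⟩ := hva'
  refine ⟨b + h 1, ?_, ?_⟩
  · have : ((a, b) : V × V) + (h 0, h (0 + 1)) ∈ C := C.add_mem hab (hch 0)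
    have e : ((a, b) : V × V) + (h 0, h (0 + 1)) = (v, b + h 1) := by
      rw [h0]; norm_num
    rwa [e] at this
  · have h1S : h 1 ∈ Ssharp := by
      have : h 1 ∈ (Ssharp : Set V) := by rw [hSs]; exact mem_csharp_shift C hch 1
      exact this
    rw [map_add, hb]
    have : Ssharp.mkQ (h 1) = 0 := (Submodule.Quotient.mk_eq_zero _).2 h1S
    rw [this, add_zero]

lemma step_bwd (C : Submodule K (V × V)) (Ssharp : Submodule K V)
    (hSs : (Ssharp : Set V) = csharp C) (f : ℤ → V ⧸ Ssharp)
    (hf : IsCChain (C.map (Ssharp.mkQ.prodMap Ssharp.mkQ)) f)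
    (n : ℤ) (v : V) (hv : Ssharp.mkQ v = f n) :
    ∃ v', (v', v) ∈ C ∧ Ssharp.mkQ v' = f (n - 1) := by
  obtain ⟨⟨a, b⟩, hab, heq⟩ := hf (n - 1)
  have ha : Ssharp.mkQ a = f (n - 1) := congrArg Prod.fst heq
  have hb : Ssharp.mkQ b = f n := by
    have := congrArg Prod.snd heq
    simpa using this
  have hvb : v - b ∈ Ssharp := by
    rw [← Submodule.Quotient.mk_eq_zero]
    show Ssharp.mkQ (v - b) = 0
    rw [map_sub, hv, hb, sub_self]
  have hvb' : v - b ∈ csharp C := by rw [← hSs] at *; exact hvb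
  obtain ⟨h, hch, h0⟩ := hvb'
  refine ⟨a + h (-1), ?_, ?_⟩
  · have : ((a, b) : V × V) + (h (-1), h (-1 + 1)) ∈ C := C.add_mem hab (hch (-1))
    have e : ((a, b) : V × V) + (h (-1), h (-1 + 1)) = (a + h (-1), v) := by
      norm_num [h0]
    rwa [e] at this
  · have h1S : h (-1) ∈ Ssharp := by
      have : h (-1) ∈ (Ssharp : Set V) := by rw [hSs]; exact mem_csharp_shift C hch (-1)
      exact this
    rw [map_add, ha]
    have : Ssharp.mkQ (h (-1)) = 0 := (Submodule.Quotient.mk_eq_zero _).2 h1S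
    rw [this, add_zero]

lemma dchain_zero (C : Submodule K (V × V)) (Ssharp : Submodule K V)
    (hSs : (Ssharp : Set V) = csharp C) (f : ℤ → V ⧸ Ssharp)
    (hf : IsCChain (C.map (Ssharp.mkQ.prodMap Ssharp.mkQ)) f) : f 0 = 0 := by
  obtain ⟨w, hw⟩ := Submodule.Quotient.mk_surjective Ssharp (f 0)
  replace hw : Ssharp.mkQ w = f 0 := hw
  have stepF : ∀ (n : ℕ) (v : V), Ssharp.mkQ v = f n →
      ∃ b, (v, b) ∈ C ∧ Ssharp.mkQ b = f ((n : ℕ) + 1 : ℕ) := by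
    intro n v hvn
    obtain ⟨v', hC, hm⟩ := step_fwd C Ssharp hSs f hf n v hvn
    exact ⟨v', hC, by rw [hm]; norm_cast⟩
  have stepB : ∀ (n : ℕ) (v : V), Ssharp.mkQ v = f (-(n : ℤ)) →
      ∃ b, (b, v) ∈ C ∧ Ssharp.mkQ b = f (-(((n : ℕ) + 1 : ℕ) : ℤ)) := by
    intro n v hvn
    obtain ⟨v', hC, hm⟩ := step_bwd C Ssharp hSs f hf (-(n : ℤ)) v hvn
    exact ⟨v', hC, by rw [hm]; congr 1; push_cast; ring⟩
  set fwd := natChain (fun (n : ℕ) (v : V) => Ssharp.mkQ v = f n)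
      (fun a b => (a, b) ∈ C) ⟨w, by simpa using hw⟩ stepF with hfwd
  set bwd := natChain (fun (n : ℕ) (v : V) => Ssharp.mkQ v = f (-(n : ℤ)))
      (fun a b => (b, a) ∈ C) ⟨w, by simpa using hw⟩ stepB with hbwd
  have fwd_rel : ∀ n : ℕ, ((fwd n).1, (fwd (n + 1)).1) ∈ C := by
    intro n; rw [hfwd]
    exact natChain_rel (fun (n : ℕ) (v : V) => Ssharp.mkQ v = f n)
      (fun a b => (a, b) ∈ C) ⟨w, by simpa using hw⟩ stepF n
  have bwd_rel : ∀ n : ℕ, ((bwd (n + 1)).1, (bwd n).1) ∈ C := by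
    intro n; rw [hbwd]
    exact natChain_rel (fun (n : ℕ) (v : V) => Ssharp.mkQ v = f (-(n : ℤ)))
      (fun a b => (b, a) ∈ C) ⟨w, by simpa using hw⟩ stepB n
  have fwd0 : (fwd 0).1 = w := rfl
  have bwd0 : (bwd 0).1 = w := rfl
  set g : ℤ → V := fun n => if 0 ≤ n then (fwd n.toNat).1 else (bwd (-n).toNat).1 with hg
  have hgchain : IsCChain C g := by
    intro n
    rcases le_or_gt 0 n with hn | hn
    · have e : (n + 1).toNat = n.toNat + 1 := by omega
      have h1 : g n = (fwd n.toNat).1 := by simp only [hg]; rw [if_pos hn]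
      have h2 : g (n + 1) = (fwd (n.toNat + 1)).1 := by
        have hn1 : (0:ℤ) ≤ n + 1 := by omega
        simp only [hg]; rw [if_pos hn1, e]
      rw [h1, h2]
      exact fwd_rel n.toNat
    · have hneg : ¬ (0:ℤ) ≤ n := by omega
      rcases eq_or_lt_of_le (by omega : n + 1 ≤ 0) with hn1 | hn1
      · have e : (-n).toNat = 1 := by omega
        have e0 : (n + 1).toNat = 0 := by omega
        have h1 : g n = (bwd 1).1 := by simp only [hg]; rw [if_neg hneg, e]
        have h2 : g (n + 1) = (bwd 0).1 := by
          have hp : (0:ℤ) ≤ n + 1 := by omega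
          simp only [hg]; rw [if_pos hp, e0, fwd0, bwd0]
        rw [h1, h2]
        exact bwd_rel 0
      · have hneg1 : ¬ (0:ℤ) ≤ n + 1 := by omega
        have e : (-n).toNat = (-(n + 1)).toNat + 1 := by omega
        have h1 : g n = (bwd ((-(n + 1)).toNat + 1)).1 := by
          simp only [hg]; rw [if_neg hneg, e]
        have h2 : g (n + 1) = (bwd ((-(n + 1)).toNat)).1 := by
          simp only [hg]; rw [if_neg hneg1]
        rw [h1, h2]
        exact bwd_rel _
  have hg0 : g 0 = w := by simp only [hg]; rw [if_pos le_rfl]; exact fwd0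
  have : w ∈ csharp C := ⟨g, hgchain, hg0⟩
  rw [← hSs] at this
  rw [← hw]
  exact (Submodule.Quotient.mk_eq_zero _).2 this

end Steps


/-- Every morphism of Kronecker modules from a finite-dimensional automorphic
regular Kronecker module `M = (X, Y, pM, qM)` (both structure maps isomorphisms)
to the quotient relation `(V/C^♯, C/C|_{C^♯})` is zero. The quotient relation is
realized as the image `D` of `C` in `(V/C^♯) ⊕ (V/C^♯)`. -/
theorem no_map_automorphic_to_quotient_by_sharp
    {V : Type*} [AddCommGroup V] [Module K V] (C : Submodule K (V × V))
    (Ssharp : Submodule K V) (hSs : (Ssharp : Set V) = csharp C)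
    {X Y : Type*} [AddCommGroup X] [Module K X] [AddCommGroup Y] [Module K Y]
    [FiniteDimensional K X] [FiniteDimensional K Y]
    (pM qM : X →ₗ[K] Y)
    (hpM : Function.Bijective pM) (hqM : Function.Bijective qM)
    (θ : X →ₗ[K] ↥(C.map (Ssharp.mkQ.prodMap Ssharp.mkQ)))
    (φ : Y →ₗ[K] V ⧸ Ssharp)
    (h1 : ∀ x, ((θ x : (V ⧸ Ssharp) × (V ⧸ Ssharp))).1 = φ (pM x))
    (h2 : ∀ x, ((θ x : (V ⧸ Ssharp) × (V ⧸ Ssharp))).2 = φ (qM x)) :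
    θ = 0 ∧ φ = 0 := by
  have hφ : φ = 0 := by
    ext y
    set ep := LinearEquiv.ofBijective pM hpM with hep
    set eq := LinearEquiv.ofBijective qM hqM with heq
    set T : Y ≃ₗ[K] Y := ep.symm.trans eq with hT
    set f : ℤ → V ⧸ Ssharp := fun n => φ ((T ^ n) y) with hfdef
    have hf : IsCChain (C.map (Ssharp.mkQ.prodMap Ssharp.mkQ)) f := by
      intro n
      set x := ep.symm ((T ^ n) y) with hx
      have hmem := (θ x).2
      have hp' : pM x = (T ^ n) y := by
        have h : pM x = ep (ep.symm ((T ^ n) y)) := rfl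
        rw [h, ep.apply_symm_apply]
      have hq' : qM x = (T ^ (n + 1)) y := by
        have h : qM x = eq (ep.symm ((T ^ n) y)) := rfl
        rw [h, add_comm, zpow_add, zpow_one]
        rfl
      have hcoe : ((θ x : (V ⧸ Ssharp) × (V ⧸ Ssharp))) = (f n, f (n + 1)) := by
        refine Prod.ext ?_ ?_
        · rw [h1 x, hp']
        · rw [h2 x, hq']
      rw [← hcoe]
      exact hmem
    have hz := dchain_zero C Ssharp hSs f hf
    have hf0 : f 0 = φ y := by
      rw [hfdef]
      simp only
      rw [zpow_zero]
      rfl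
    rw [LinearMap.zero_apply, ← hf0]
    exact hz
  refine ⟨?_, hφ⟩
  refine LinearMap.ext fun x => ?_
  have e1 : ((θ x : (V ⧸ Ssharp) × (V ⧸ Ssharp))).1 = 0 := by rw [h1, hφ]; rfl
  have e2 : ((θ x : (V ⧸ Ssharp) × (V ⧸ Ssharp))).2 = 0 := by rw [h2, hφ]; rfl
  have hc : ((θ x : (V ⧸ Ssharp) × (V ⧸ Ssharp))) = 0 := Prod.ext e1 e2
  rw [LinearMap.zero_apply]
  exact Subtype.ext (by rw [hc]; simp)
end

section
/- Let (V,C) be a linear relation. If there is a subspace U with C^♯ = C^♭ ⊕ U and (U, C|_U) automorphic, then C|_{C^♯} = C|_{C^♭} ⊕ C|_U as subspaces of V ⊕ V; consequently the exact sequence 0 → (C^♭, C|_{C^♭}) → (C^♯, C|_{C^♯}) → (C^♯/C^♭, quotient relation) → 0 splits as Kronecker modules. -/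
variable {K : Type*} [Field K]

section KeyLemma
variable {V : Type*} [AddCommGroup V] [Module K V]

/-- Key lemma: `C^♯ ∩ C C^♭ = C^♭`, i.e. if `v ∈ C^♭`, `(v,w) ∈ C` and `w ∈ C^♯`,
then `w ∈ C^♭`. -/
lemma key_flat (C : Submodule K (V × V)) {v w : V}
    (hv : v ∈ cflat C) (hc : (v, w) ∈ C) (hw : w ∈ csharp C) : w ∈ cflat C := by
  obtain ⟨a, ⟨f, hf, hf0, N, hfN⟩, b, ⟨g, hg, hg0, M, hgM⟩, rfl⟩ := hv
  obtain ⟨h, hh, hh0⟩ := hw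
  -- the corrected sharp chain through w - f 1 - g 1
  set h' : ℤ → V := fun n => h n - f (n + 1) - g (n + 1) with hh'
  have hh'chain : IsCChain C h' := by
    intro n
    have := C.sub_mem (C.sub_mem (hh n) (hf (n + 1))) (hg (n + 1))
    simpa [h', Prod.ext_iff] using this
  have hzero : (0, h' 0) ∈ C := by
    have := C.sub_mem (C.sub_mem hc (hf 0)) (hg 0)
    have e1 : ((a + b, w) - (f 0, f (0 + 1)) - (g 0, g (0 + 1))) = ((0 : V), h' 0) := by
      simp [h', hf0, hg0, hh0, Prod.ext_iff]
    rwa [e1] at this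
  -- chain for h' 0 which is zero to the left
  set k : ℤ → V := fun n => if 0 ≤ n then h' n else 0 with hk'
  have hk : IsCChain C k := by
    intro n
    rcases lt_trichotomy n (-1) with h1 | h1 | h1
    · have e1 : ¬ (0 ≤ n) := by omega
      have e2 : ¬ (0 ≤ n + 1) := by omega
      simp only [k, if_neg e1, if_neg e2]
      exact C.zero_mem
    · subst h1
      have e1 : ¬ (0 ≤ (-1 : ℤ)) := by omega
      have e2 : ((-1 : ℤ) + 1) = 0 := by omega
      simp only [k, if_neg e1, e2, if_pos le_rfl]
      exact hzero
    · have e1 : (0 : ℤ) ≤ n := by omega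
      have e2 : (0 : ℤ) ≤ n + 1 := by omega
      simp only [k, if_pos e1, if_pos e2]
      exact hh'chain n
  -- f 1 ∈ cplus
  have hf1 : f 1 ∈ cplus C := by
    refine ⟨fun n => f (n + 1), fun n => hf (n + 1), by norm_num, N - 1, fun n hn => ?_⟩
    exact hfN (n + 1) (by omega)
  -- h' 0 + g 1 ∈ cminus
  have hg1 : h' 0 + g 1 ∈ cminus C := by
    refine ⟨fun n => k n + g (n + 1), ?_, ?_, min (-1) (M - 1), fun n hn => ?_⟩
    · intro n
      have := C.add_mem (hk n) (hg (n + 1))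
      simpa [Prod.ext_iff] using this
    · simp [k]
    · have e1 : ¬ (0 ≤ n) := by omega
      have e2 : g (n + 1) = 0 := hgM (n + 1) (by omega)
      simp [k, if_neg e1, e2]
  refine ⟨f 1, hf1, h' 0 + g 1, hg1, ?_⟩
  have : h' 0 = w - f 1 - g 1 := by
    simp [h', hh0]
  rw [this]
  abel

end KeyLemma

/-- If `C^♯ = C^♭ ⊕ U` with `(U, C|_U)` automorphic, then
`C|_{C^♯} = C|_{C^♭} ⊕ C|_U` as subspaces of `V ⊕ V`; consequently the exact
sequence `0 → (C^♭,C|_{C^♭}) → (C^♯,C|_{C^♯}) → (C^♯/C^♭, ⋅) → 0` of Kronecker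
modules splits, i.e. the inclusion of `(C^♭, C|_{C^♭})` admits a retraction of
relations. Here `Ssharp`, `Sflat` are the subspaces underlying `C^♯`, `C^♭`. -/
theorem split_relation_decomposition
    {V : Type*} [AddCommGroup V] [Module K V] (C : Submodule K (V × V))
    (Ssharp Sflat U : Submodule K V)
    (hSs : (Ssharp : Set V) = csharp C) (hSf : (Sflat : Set V) = cflat C)
    (hsum : Sflat ⊔ U = Ssharp) (hdisj : Disjoint Sflat U) (hle : Sflat ≤ Ssharp)
    (haut1 : ∀ u ∈ U, ∃! w, w ∈ U ∧ (u, w) ∈ C)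
    (haut2 : ∀ w ∈ U, ∃! u, u ∈ U ∧ (u, w) ∈ C) :
    (C ⊓ Submodule.prod Ssharp Ssharp =
      (C ⊓ Submodule.prod Sflat Sflat) ⊔ (C ⊓ Submodule.prod U U)) ∧
    Disjoint (C ⊓ Submodule.prod Sflat Sflat) (C ⊓ Submodule.prod U U) ∧
    ∃ r : ↥Ssharp →ₗ[K] ↥Sflat,
      (∀ v : ↥Sflat, r (Submodule.inclusion hle v) = v) ∧
      (∀ x y : ↥Ssharp, ((x : V), (y : V)) ∈ C → ((r x : V), (r y : V)) ∈ C) := by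
  have hUle : U ≤ Ssharp := by rw [← hsum]; exact le_sup_right
  -- key decomposition of any element of C ∩ Ssharp × Ssharp
  have key : ∀ x y : V, (x, y) ∈ C → x ∈ Ssharp → y ∈ Ssharp →
      ∃ xf ∈ Sflat, ∃ xu ∈ U, ∃ yf ∈ Sflat, ∃ yu ∈ U,
        x = xf + xu ∧ y = yf + yu ∧ (xf, yf) ∈ C ∧ (xu, yu) ∈ C := by
    intro x y hxy hx hy
    rw [← hsum] at hx
    obtain ⟨xf, hxf, xu, hxu, rfl⟩ := Submodule.mem_sup.mp hx
    obtain ⟨w, ⟨hwU, hwC⟩, -⟩ := haut1 xu hxu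
    have hyw : (xf, y - w) ∈ C := by
      have := C.sub_mem hxy hwC
      have e1 : ((xf + xu, y) - (xu, w)) = (xf, y - w) := by
        simp [Prod.ext_iff]
      rwa [e1] at this
    have hywS : y - w ∈ Sflat := by
      have h1 : y - w ∈ csharp C := by
        rw [← hSs]
        exact Ssharp.sub_mem hy (hUle hwU)
      have h2 : xf ∈ cflat C := by rw [← hSf]; exact hxf
      have := key_flat C h2 hyw h1
      rwa [← hSf] at this
    exact ⟨xf, hxf, xu, hxu, y - w, hywS, w, hwU, rfl, by abel, hyw, hwC⟩
  have goal1 : C ⊓ Submodule.prod Ssharp Ssharp =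
      (C ⊓ Submodule.prod Sflat Sflat) ⊔ (C ⊓ Submodule.prod U U) := by
    refine le_antisymm ?_ (sup_le (inf_le_inf_left C (Submodule.prod_mono hle hle))
      (inf_le_inf_left C (Submodule.prod_mono hUle hUle)))
    rintro ⟨x, y⟩ hz
    obtain ⟨hzC, hz1, hz2⟩ := hz
    obtain ⟨xf, hxf, xu, hxu, yf, hyf, yu, hyu, hx, hy, hC1, hC2⟩ := key x y hzC hz1 hz2
    refine Submodule.mem_sup.mpr ⟨(xf, yf), ⟨hC1, hxf, hyf⟩, (xu, yu), ⟨hC2, hxu, hyu⟩, ?_⟩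
    simp [Prod.ext_iff, hx, hy]
  refine ⟨goal1, ?_, ?_⟩
  · rw [Submodule.disjoint_def]
    rintro ⟨x, y⟩ ⟨-, hx1, hy1⟩ ⟨-, hx2, hy2⟩
    have e1 : x = 0 := Submodule.disjoint_def.mp hdisj x hx1 hx2
    have e2 : y = 0 := Submodule.disjoint_def.mp hdisj y hy1 hy2
    simp [e1, e2, Prod.ext_iff]
  -- the retraction
  · set p := Sflat.comap Ssharp.subtype with hp
    set q := U.comap Ssharp.subtype with hq
    have hcompl : IsCompl p q := by
      constructor
      · rw [Submodule.disjoint_def]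
        intro x hxp hxq
        exact Subtype.ext (Submodule.disjoint_def.mp hdisj _ hxp hxq)
      · rw [codisjoint_iff, eq_top_iff]
        rintro ⟨x, hx⟩ -
        rw [← hsum] at hx
        obtain ⟨a, ha, b, hb, rfl⟩ := Submodule.mem_sup.mp hx
        refine Submodule.mem_sup.mpr ⟨⟨a, hle ha⟩, ha, ⟨b, hUle hb⟩, hb, rfl⟩
    set proj := p.linearProjOfIsCompl q hcompl with hproj
    set e := Submodule.comapSubtypeEquivOfLe hle with he
    set r := e.toLinearMap.comp proj with hr
    have hrval : ∀ x : ↥Ssharp, ∀ xf ∈ Sflat, ∀ xu ∈ U, (x : V) = xf + xu → (r x : V) = xf := by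
      intro x xf hxf xu hxu hsplit
      have hx : x = (⟨xf, hle hxf⟩ : ↥Ssharp) + ⟨xu, hUle hxu⟩ := Subtype.ext (by simpa using hsplit)
      have h1 : proj ⟨xf, hle hxf⟩ = ⟨⟨xf, hle hxf⟩, hxf⟩ :=
        Submodule.linearProjOfIsCompl_apply_left hcompl ⟨⟨xf, hle hxf⟩, hxf⟩
      have h2 : proj ⟨xu, hUle hxu⟩ = 0 :=
        Submodule.projectionOnto_apply_of_mem_right hcompl hxu
      rw [hx]
      simp only [r, LinearMap.comp_apply, map_add, h1, h2, map_zero, add_zero,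
        LinearEquiv.coe_coe, Submodule.comapSubtypeEquivOfLe_apply_coe]
      rfl
    refine ⟨r, ?_, ?_⟩
    · intro v
      apply Subtype.ext
      have := hrval (Submodule.inclusion hle v) (v : V) v.2 0 U.zero_mem (by simp)
      simpa using this
    · intro x y hxy
      obtain ⟨xf, hxf, xu, hxu, yf, hyf, yu, hyu, hx, hy, hC1, hC2⟩ := key x y hxy x.2 y.2
      rw [hrval x xf hxf xu hxu hx, hrval y yf hyf yu hyu hy]
      exact hC1
end
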